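/- arXiv:1307.7113 — 4 statements merged into one kernel-verified Lean document; each statement's English description precedes it below -/
import Mathlib

section
/- The images of the matrices A = [[1,2],[0,1]] and B = [[1,0],[2,1]] in PSL₂(ℤ) freely generate the image of the principal congruence subgroup Γ(2); that is, the homomorphism from the free group on two generators to PSL₂(ℤ) sending the generators to the images of A and B is injective, and its range is exactly the image of Γ(2) in PSL₂(ℤ). -/
/-- `SL(2, ℤ)`. -/
abbrev SL2Z := Matrix.SpecialLinearGroup (Fin 2) ℤ

/-- `PSL₂(ℤ)`, the quotient of `SL(2, ℤ)` by its center `{±I}`. -/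
abbrev PSL2Z := SL2Z ⧸ Subgroup.center SL2Z

/-- The projection `SL(2, ℤ) → PSL₂(ℤ)`. -/
def projSL : SL2Z →* PSL2Z := QuotientGroup.mk' (Subgroup.center SL2Z)

/-- `Γ̄(N)`, the image of the principal congruence subgroup `Γ(N)` in `PSL₂(ℤ)`. -/
def GammaBar (N : ℕ) : Subgroup PSL2Z := (CongruenceSubgroup.Gamma N).map projSL

/-- The matrix `A = [[1,2],[0,1]]` in `SL(2, ℤ)`. -/
def matA : SL2Z := ⟨!![1, 2; 0, 1], by norm_num [Matrix.det_fin_two_of]⟩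

/-- The matrix `B = [[1,0],[2,1]]` in `SL(2, ℤ)`. -/
def matB : SL2Z := ⟨!![1, 0; 2, 1], by norm_num [Matrix.det_fin_two_of]⟩

/-- The matrix `T = [[1,1],[0,1]]` in `SL(2, ℤ)`. -/
def matT : SL2Z := ⟨!![1, 1; 0, 1], by norm_num [Matrix.det_fin_two_of]⟩

/-- The matrix `L = [[1,0],[1,1]]` in `SL(2, ℤ)`. -/
def matL : SL2Z := ⟨!![1, 0; 1, 1], by norm_num [Matrix.det_fin_two_of]⟩

/-- `Ā`, the image of `A` in `PSL₂(ℤ)`. -/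
def Abar : PSL2Z := projSL matA

/-- `B̄`, the image of `B` in `PSL₂(ℤ)`. -/
def Bbar : PSL2Z := projSL matB

/-! ### Auxiliary material -/

open Pointwise

section Aux

/-- Nonzero integer vectors of length 2: the ping-pong board. -/
abbrev V2 := {v : Fin 2 → ℤ // v ≠ 0}

lemma SL2Z.mulVec_ne_zero (g : SL2Z) {v : Fin 2 → ℤ} (hv : v ≠ 0) :
    g.1.mulVec v ≠ 0 := by
  intro h
  apply hv
  have h2 : (g⁻¹).1.mulVec (g.1.mulVec v) = 0 := by rw [h, Matrix.mulVec_zero]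
  rwa [Matrix.mulVec_mulVec, ← Matrix.SpecialLinearGroup.coe_mul, inv_mul_cancel,
    Matrix.SpecialLinearGroup.coe_one, Matrix.one_mulVec] at h2

instance : SMul SL2Z V2 := ⟨fun g v => ⟨g.1.mulVec v.1, SL2Z.mulVec_ne_zero g v.2⟩⟩

lemma V2.smul_coe (g : SL2Z) (v : V2) : (g • v).1 = g.1.mulVec v.1 := rfl

instance : MulAction SL2Z V2 where
  one_smul v := Subtype.ext <| by
    rw [V2.smul_coe, Matrix.SpecialLinearGroup.coe_one, Matrix.one_mulVec]
  mul_smul g h v := Subtype.ext <| by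
    simp only [V2.smul_coe, Matrix.SpecialLinearGroup.coe_mul, Matrix.mulVec_mulVec]

lemma mulVec_zero_apply (M : Matrix (Fin 2) (Fin 2) ℤ) (v : Fin 2 → ℤ) :
    M.mulVec v 0 = M 0 0 * v 0 + M 0 1 * v 1 := by
  simp [Matrix.mulVec, dotProduct, Fin.sum_univ_two]

lemma mulVec_one_apply (M : Matrix (Fin 2) (Fin 2) ℤ) (v : Fin 2 → ℤ) :
    M.mulVec v 1 = M 1 0 * v 0 + M 1 1 * v 1 := by
  simp [Matrix.mulVec, dotProduct, Fin.sum_univ_two]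

end Aux


section PingPong

lemma matA_inv : matA⁻¹ = ⟨!![1, -2; 0, 1], by norm_num [Matrix.det_fin_two_of]⟩ := by
  apply inv_eq_of_mul_eq_one_right
  apply Subtype.ext
  norm_num [matA, Matrix.SpecialLinearGroup.coe_mul, Matrix.SpecialLinearGroup.coe_one,
    Matrix.mul_fin_two]
  ext i j
  fin_cases i <;> fin_cases j <;> rfl

lemma matB_inv : matB⁻¹ = ⟨!![1, 0; -2, 1], by norm_num [Matrix.det_fin_two_of]⟩ := by
  apply inv_eq_of_mul_eq_one_right
  apply Subtype.ext
  norm_num [matB, Matrix.SpecialLinearGroup.coe_mul, Matrix.SpecialLinearGroup.coe_one,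
    Matrix.mul_fin_two]
  ext i j
  fin_cases i <;> fin_cases j <;> rfl

/-- Ping-pong attracting sets. -/
def ppX : Fin 2 → Set V2 :=
  ![{v | v.1 1 * (v.1 0 - v.1 1) > 0}, {v | v.1 0 ≠ 0 ∧ v.1 0 * (v.1 1 - v.1 0) ≥ 0}]

/-- Ping-pong repelling sets. -/
def ppY : Fin 2 → Set V2 :=
  ![{v | v.1 1 * (v.1 0 + v.1 1) ≤ 0}, {v | v.1 0 = 0 ∨ v.1 0 * (v.1 1 + v.1 0) < 0}]

lemma ppX0 (v : V2) : v ∈ ppX 0 ↔ v.1 1 * (v.1 0 - v.1 1) > 0 := by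
  simp [ppX, Set.mem_setOf_eq]

lemma ppX1 (v : V2) : v ∈ ppX 1 ↔ v.1 0 ≠ 0 ∧ v.1 0 * (v.1 1 - v.1 0) ≥ 0 := by
  simp [ppX, Set.mem_setOf_eq]

lemma ppY0 (v : V2) : v ∈ ppY 0 ↔ v.1 1 * (v.1 0 + v.1 1) ≤ 0 := by
  simp [ppY, Set.mem_setOf_eq]

lemma ppY1 (v : V2) : v ∈ ppY 1 ↔ v.1 0 = 0 ∨ v.1 0 * (v.1 1 + v.1 0) < 0 := by
  simp [ppY, Set.mem_setOf_eq]

lemma v2_ne (v : V2) : v.1 0 ≠ 0 ∨ v.1 1 ≠ 0 := by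
  by_contra h
  push_neg at h
  exact v.2 (funext fun i => by fin_cases i <;> simp [h.1, h.2])

lemma disjX01 : Disjoint (ppX 0) (ppX 1) := by
  rw [Set.disjoint_left]
  rintro v h1 h2
  rw [ppX0] at h1; rw [ppX1] at h2
  nlinarith [h1, h2.2, sq_nonneg (v.1 0 - v.1 1)]

lemma disjY01 : Disjoint (ppY 0) (ppY 1) := by
  rw [Set.disjoint_left]
  rintro v h1 h2
  rw [ppY0] at h1; rw [ppY1] at h2
  rcases h2 with h2 | h2
  · rcases v2_ne v with hv | hv
    · exact hv h2
    · rw [h2] at h1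
      nlinarith [h1, mul_self_pos.mpr hv]
  · nlinarith [h1, h2, sq_nonneg (v.1 0 + v.1 1)]

lemma disjXY00 : Disjoint (ppX 0) (ppY 0) := by
  rw [Set.disjoint_left]
  rintro v h1 h2
  rw [ppX0] at h1; rw [ppY0] at h2
  nlinarith [h1, h2, sq_nonneg (v.1 1)]

lemma disjXY01 : Disjoint (ppX 0) (ppY 1) := by
  rw [Set.disjoint_left]
  rintro v h1 h2
  rw [ppX0] at h1; rw [ppY1] at h2
  rcases h2 with h2 | h2
  · rw [h2] at h1; nlinarith [h1, sq_nonneg (v.1 1)]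
  · nlinarith [h1, h2, sq_nonneg (v.1 0), sq_nonneg (v.1 1)]

lemma disjXY10 : Disjoint (ppX 1) (ppY 0) := by
  rw [Set.disjoint_left]
  rintro v h1 h2
  rw [ppX1] at h1; rw [ppY0] at h2
  nlinarith [h1.2, h2, mul_self_pos.mpr h1.1, sq_nonneg (v.1 1)]

lemma disjXY11 : Disjoint (ppX 1) (ppY 1) := by
  rw [Set.disjoint_left]
  rintro v h1 h2
  rw [ppX1] at h1; rw [ppY1] at h2
  rcases h2 with h2 | h2
  · exact h1.1 h2
  · nlinarith [h1.2, h2, mul_self_pos.mpr h1.1]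

lemma hX0 : (![matA, matB] : Fin 2 → SL2Z) 0 • (ppY 0)ᶜ ⊆ ppX 0 := by
  rintro x hx
  rw [Set.mem_smul_set] at hx
  obtain ⟨v, hv, rfl⟩ := hx
  rw [Set.mem_compl_iff, ppY0] at hv
  push_neg at hv
  rw [ppX0]
  show (_ : Fin 2 → ℤ) 1 * _ > 0
  rw [V2.smul_coe]
  simp only [Matrix.cons_val_zero, mulVec_zero_apply, mulVec_one_apply]
  norm_num [matA]
  nlinarith [hv]

lemma hX1 : (![matA, matB] : Fin 2 → SL2Z) 1 • (ppY 1)ᶜ ⊆ ppX 1 := by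
  rintro x hx
  rw [Set.mem_smul_set] at hx
  obtain ⟨v, hv, rfl⟩ := hx
  rw [Set.mem_compl_iff, ppY1] at hv
  push_neg at hv
  rw [ppX1]
  show (_ : Fin 2 → ℤ) 0 ≠ 0 ∧ (_ : Fin 2 → ℤ) 0 * _ ≥ 0
  rw [V2.smul_coe]
  simp only [Matrix.cons_val_one, Matrix.head_cons, Matrix.cons_val_zero, mulVec_zero_apply, mulVec_one_apply]
  norm_num [matB]
  exact ⟨hv.1, by nlinarith [hv.2]⟩

lemma hY0 : (![matA, matB] : Fin 2 → SL2Z)⁻¹ 0 • (ppX 0)ᶜ ⊆ ppY 0 := by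
  rintro x hx
  rw [Set.mem_smul_set] at hx
  obtain ⟨v, hv, rfl⟩ := hx
  rw [Set.mem_compl_iff, ppX0] at hv
  push_neg at hv
  rw [ppY0]
  show (_ : Fin 2 → ℤ) 1 * _ ≤ 0
  have : (![matA, matB] : Fin 2 → SL2Z)⁻¹ 0 = matA⁻¹ := rfl
  rw [this, V2.smul_coe, matA_inv]
  simp only [mulVec_zero_apply, mulVec_one_apply]
  norm_num
  nlinarith [hv]

lemma hY1 : (![matA, matB] : Fin 2 → SL2Z)⁻¹ 1 • (ppX 1)ᶜ ⊆ ppY 1 := by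
  rintro x hx
  rw [Set.mem_smul_set] at hx
  obtain ⟨v, hv, rfl⟩ := hx
  rw [Set.mem_compl_iff, ppX1] at hv
  rw [ppY1]
  show (_ : Fin 2 → ℤ) 0 = 0 ∨ (_ : Fin 2 → ℤ) 0 * _ < 0
  have : (![matA, matB] : Fin 2 → SL2Z)⁻¹ 1 = matB⁻¹ := rfl
  rw [this, V2.smul_coe, matB_inv]
  simp only [mulVec_zero_apply, mulVec_one_apply]
  norm_num
  by_cases h0 : v.1 0 = 0
  · exact Or.inl h0
  · right
    have hv2 : ¬ v.1 0 * (v.1 1 - v.1 0) ≥ 0 := fun h => hv ⟨h0, h⟩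
    push_neg at hv2
    nlinarith [hv2]

lemma liftSL_injective : Function.Injective (FreeGroup.lift ![matA, matB]) := by
  apply FreeGroup.injective_lift_of_ping_pong ![matA, matB] ppX ppY
  · intro i
    fin_cases i
    · exact ⟨⟨![2, 1], fun h => by simpa using congrFun h 0⟩, (ppX0 _).mpr (by norm_num)⟩
    · exact ⟨⟨![1, 2], fun h => by simpa using congrFun h 0⟩, (ppX1 _).mpr (by norm_num)⟩
  · intro i j hij
    fin_cases i <;> fin_cases j <;>
      first
        | exact absurd rfl hij
        | exact disjX01
        | exact disjX01.symm
  · intro i j hij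
    fin_cases i <;> fin_cases j <;>
      first
        | exact absurd rfl hij
        | exact disjY01
        | exact disjY01.symm
  · intro i j
    fin_cases i <;> fin_cases j <;>
      first
        | exact disjXY00
        | exact disjXY01
        | exact disjXY10
        | exact disjXY11
  · intro i
    fin_cases i
    · exact hX0
    · exact hX1
  · intro i
    fin_cases i
    · exact hY0
    · exact hY1

end PingPong

section Powers

lemma matA_zpow (m : ℤ) : (matA ^ m).1 = !![1, 2*m; 0, 1] := by
  induction m using Int.induction_on with
  | zero =>
      rw [zpow_zero, Matrix.SpecialLinearGroup.coe_one, Matrix.one_fin_two]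
      norm_num
  | succ n ih =>
      rw [zpow_add_one, Matrix.SpecialLinearGroup.coe_mul, ih]
      show _ * (!![1, 2; 0, 1] : Matrix (Fin 2) (Fin 2) ℤ) = _
      rw [Matrix.mul_fin_two]
      congr 1 <;> push_cast <;> ring
  | pred n ih =>
      rw [zpow_sub_one, Matrix.SpecialLinearGroup.coe_mul, ih, matA_inv]
      show _ * (!![1, -2; 0, 1] : Matrix (Fin 2) (Fin 2) ℤ) = _
      rw [Matrix.mul_fin_two]
      congr 1 <;> push_cast <;> ring

lemma matB_zpow (m : ℤ) : (matB ^ m).1 = !![1, 0; 2*m, 1] := by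
  induction m using Int.induction_on with
  | zero =>
      rw [zpow_zero, Matrix.SpecialLinearGroup.coe_one, Matrix.one_fin_two]
      norm_num
  | succ n ih =>
      rw [zpow_add_one, Matrix.SpecialLinearGroup.coe_mul, ih]
      show _ * (!![1, 0; 2, 1] : Matrix (Fin 2) (Fin 2) ℤ) = _
      rw [Matrix.mul_fin_two]
      congr 1 <;> push_cast <;> ring
  | pred n ih =>
      rw [zpow_sub_one, Matrix.SpecialLinearGroup.coe_mul, ih, matB_inv]
      show _ * (!![1, 0; -2, 1] : Matrix (Fin 2) (Fin 2) ℤ) = _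
      rw [Matrix.mul_fin_two]
      congr 1 <;> push_cast <;> ring

end Powers

section Invariant

/-- The mod-4 invariant satisfied by all words in `A` and `B`. -/
def Pm (M : SL2Z) : Prop :=
  ((4:ℤ) ∣ M.1 0 0 - 1) ∧ ((4:ℤ) ∣ M.1 1 1 - 1) ∧ ((2:ℤ) ∣ M.1 0 1) ∧ ((2:ℤ) ∣ M.1 1 0)

lemma Pm_mul {M N : SL2Z} (hM : Pm M) (hN : Pm N) : Pm (M * N) := by
  obtain ⟨⟨a, ha⟩, ⟨d, hd⟩, ⟨b, hb⟩, ⟨c, hc⟩⟩ := hM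
  obtain ⟨⟨a', ha'⟩, ⟨d', hd'⟩, ⟨b', hb'⟩, ⟨c', hc'⟩⟩ := hN
  have key : ∀ i j, (M * N).1 i j = M.1 i 0 * N.1 0 j + M.1 i 1 * N.1 1 j := by
    intro i j
    rw [Matrix.SpecialLinearGroup.coe_mul, Matrix.mul_apply, Fin.sum_univ_two]
  have e1 : M.1 0 0 = 4*a + 1 := by omega
  have e2 : M.1 1 1 = 4*d + 1 := by omega
  have e3 : N.1 0 0 = 4*a' + 1 := by omega
  have e4 : N.1 1 1 = 4*d' + 1 := by omega
  refine ⟨⟨4*a*a' + a + a' + b*c', ?_⟩, ⟨4*d*d' + d + d' + c*b', ?_⟩,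
      ⟨4*a*b' + b' + 4*b*d' + b, ?_⟩, ⟨4*c*a' + c + 4*d*c' + c', ?_⟩⟩ <;>
    simp only [key, e1, e2, e3, e4, hb, hc, hb', hc'] <;> ring

lemma Pm_one : Pm 1 := by
  refine ⟨⟨0, ?_⟩, ⟨0, ?_⟩, ⟨0, ?_⟩, ⟨0, ?_⟩⟩ <;>
    rw [Matrix.SpecialLinearGroup.coe_one] <;> simp

lemma Pm_lift (w : FreeGroup (Fin 2)) : Pm (FreeGroup.lift ![matA, matB] w) := by
  induction w using FreeGroup.induction_on with
  | C1 => rw [map_one]; exact Pm_one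
  | of i =>
      have : FreeGroup.lift ![matA, matB] (FreeGroup.of i) = ![matA, matB] i :=
        FreeGroup.lift_apply_of
      rw [this]
      fin_cases i
      · show Pm matA
        exact ⟨⟨0, by norm_num [matA]⟩, ⟨0, by norm_num [matA]⟩,
          ⟨1, by norm_num [matA]⟩, ⟨0, by norm_num [matA]⟩⟩
      · show Pm matB
        exact ⟨⟨0, by norm_num [matB]⟩, ⟨0, by norm_num [matB]⟩,
          ⟨0, by norm_num [matB]⟩, ⟨1, by norm_num [matB]⟩⟩
  | inv_of i _ =>
      rw [map_inv]
      have : FreeGroup.lift ![matA, matB] (FreeGroup.of i) = ![matA, matB] i :=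
        FreeGroup.lift_apply_of
      rw [this]
      fin_cases i
      · show Pm matA⁻¹
        rw [matA_inv]
        exact ⟨⟨0, by norm_num⟩, ⟨0, by norm_num⟩, ⟨-1, by norm_num⟩, ⟨0, by norm_num⟩⟩
      · show Pm matB⁻¹
        rw [matB_inv]
        exact ⟨⟨0, by norm_num⟩, ⟨0, by norm_num⟩, ⟨0, by norm_num⟩, ⟨-1, by norm_num⟩⟩
  | mul x y hx hy =>
      rw [map_mul]; exact Pm_mul hx hy

end Invariant

section ZModCenter

lemma zmod2_zero_iff {x : ℤ} : (x : ZMod 2) = 0 ↔ (2:ℤ) ∣ x :=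
  ZMod.intCast_zmod_eq_zero_iff_dvd x 2

lemma zmod2_one_iff {x : ℤ} : (x : ZMod 2) = 1 ↔ (2:ℤ) ∣ x - 1 := by
  rw [show ((1 : ZMod 2) = ((1:ℤ) : ZMod 2)) by norm_num]
  rw [← sub_eq_zero, show ((x : ZMod 2) - ((1:ℤ):ZMod 2)) = (((x - 1 : ℤ)) : ZMod 2) by push_cast; ring]
  exact ZMod.intCast_zmod_eq_zero_iff_dvd _ 2

lemma Pm_mem_Gamma2 {M : SL2Z} (h : Pm M) : M ∈ CongruenceSubgroup.Gamma 2 := by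
  obtain ⟨⟨a, ha⟩, ⟨d, hd⟩, hb, hc⟩ := h
  rw [CongruenceSubgroup.Gamma_mem]
  refine ⟨?_, ?_, ?_, ?_⟩
  · exact zmod2_one_iff.mpr ⟨2*a, by omega⟩
  · exact zmod2_zero_iff.mpr hb
  · exact zmod2_zero_iff.mpr hc
  · exact zmod2_one_iff.mpr ⟨2*d, by omega⟩

lemma center_cases {M : SL2Z} (h : M ∈ Subgroup.center SL2Z) : M = 1 ∨ M = -1 := by
  obtain ⟨r, hr, hrM⟩ := Matrix.SpecialLinearGroup.mem_center_iff.mp h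
  rw [Fintype.card_fin] at hr
  have : (r - 1) * (r + 1) = 0 := by ring_nf; linear_combination hr
  rcases mul_eq_zero.mp this with h1 | h1
  · left
    apply Subtype.ext
    rw [← hrM, show r = 1 by omega, map_one, Matrix.SpecialLinearGroup.coe_one]
  · right
    apply Subtype.ext
    rw [← hrM, show r = -1 by omega, Matrix.SpecialLinearGroup.coe_neg,
      Matrix.SpecialLinearGroup.coe_one, map_neg, map_one]

lemma neg_one_mem_center : (-1 : SL2Z) ∈ Subgroup.center SL2Z := by
  rw [Subgroup.mem_center_iff]
  intro g
  apply Subtype.ext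
  rw [Matrix.SpecialLinearGroup.coe_mul, Matrix.SpecialLinearGroup.coe_mul,
    Matrix.SpecialLinearGroup.coe_neg, Matrix.SpecialLinearGroup.coe_one]
  simp

lemma projSL_neg (M : SL2Z) : projSL (-M) = projSL M := by
  have : -M = M * (-1) := by simp
  rw [this, map_mul]
  have h1 : projSL (-1) = 1 := by
    rw [show projSL (-1) = ((-1 : SL2Z) : PSL2Z) from rfl]
    exact (QuotientGroup.eq_one_iff _).mpr neg_one_mem_center
  rw [h1, mul_one]

end ZModCenter

section Generation

lemma exists_red_pos (x y : ℤ) (hy : 0 < y) (hpar : x % 2 ≠ y % 2) :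
    ∃ k : ℤ, (x + 2 * k * y).natAbs < y.natAbs := by
  have h2y : (0:ℤ) < 2 * y := by omega
  have h1 : 2 * y * (x / (2 * y)) + x % (2 * y) = x := Int.mul_ediv_add_emod x (2 * y)
  have h2 : 0 ≤ x % (2 * y) := Int.emod_nonneg x (by omega)
  have h3 : x % (2 * y) < 2 * y := Int.emod_lt_of_pos x h2y
  have hpr : x % (2 * y) % 2 = x % 2 := Int.emod_emod_of_dvd x ⟨y, rfl⟩
  set q := x / (2 * y) with hq
  set r := x % (2 * y) with hr
  by_cases hcase : r < y
  · refine ⟨-q, ?_⟩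
    have e : x + 2 * (-q) * y = r := by linear_combination -h1
    rw [e]
    omega
  · refine ⟨-q - 1, ?_⟩
    have e : x + 2 * (-q - 1) * y = r - 2 * y := by linear_combination -h1
    rw [e]
    omega

lemma exists_red (x y : ℤ) (hy : y ≠ 0) (hpar : x % 2 ≠ y % 2) :
    ∃ k : ℤ, (x + 2 * k * y).natAbs < y.natAbs := by
  rcases hy.lt_or_gt with h | h
  · obtain ⟨k, hk⟩ := exists_red_pos x (-y) (by omega) (by omega)
    refine ⟨-k, ?_⟩
    rw [show x + 2 * (-k) * y = x + 2 * k * (-y) by ring]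
    omega
  · exact exists_red_pos x y h hpar

lemma matA_mem_Gamma2 : matA ∈ CongruenceSubgroup.Gamma 2 :=
  Pm_mem_Gamma2 ⟨⟨0, by norm_num [matA]⟩, ⟨0, by norm_num [matA]⟩,
    ⟨1, by norm_num [matA]⟩, ⟨0, by norm_num [matA]⟩⟩

lemma matB_mem_Gamma2 : matB ∈ CongruenceSubgroup.Gamma 2 :=
  Pm_mem_Gamma2 ⟨⟨0, by norm_num [matB]⟩, ⟨0, by norm_num [matB]⟩,
    ⟨0, by norm_num [matB]⟩, ⟨1, by norm_num [matB]⟩⟩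

lemma projSL_zpowA_mem (k : ℤ) : projSL (matA ^ k) ∈ (FreeGroup.lift ![Abar, Bbar]).range := by
  refine ⟨(FreeGroup.of 0) ^ k, ?_⟩
  rw [map_zpow, FreeGroup.lift_apply_of]
  show (![Abar, Bbar] 0) ^ k = _
  rw [show (![Abar, Bbar] 0) = Abar from rfl, Abar, ← map_zpow]

lemma projSL_zpowB_mem (k : ℤ) : projSL (matB ^ k) ∈ (FreeGroup.lift ![Abar, Bbar]).range := by
  refine ⟨(FreeGroup.of 1) ^ k, ?_⟩
  rw [map_zpow, FreeGroup.lift_apply_of]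
  show (![Abar, Bbar] 1) ^ k = _
  rw [show (![Abar, Bbar] 1) = Bbar from rfl, Bbar, ← map_zpow]

lemma gamma2_entries {M : SL2Z} (hM : M ∈ CongruenceSubgroup.Gamma 2) :
    (2:ℤ) ∣ M.1 0 0 - 1 ∧ (2:ℤ) ∣ M.1 0 1 ∧ (2:ℤ) ∣ M.1 1 0 ∧ (2:ℤ) ∣ M.1 1 1 - 1 := by
  rw [CongruenceSubgroup.Gamma_mem] at hM
  obtain ⟨h1, h2, h3, h4⟩ := hM
  exact ⟨zmod2_one_iff.mp h1, zmod2_zero_iff.mp h2, zmod2_zero_iff.mp h3, zmod2_one_iff.mp h4⟩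

lemma detM (M : SL2Z) : M.1 0 0 * M.1 1 1 - M.1 0 1 * M.1 1 0 = 1 := by
  have := M.2
  rwa [Matrix.det_fin_two] at this

lemma gamma2_gen : ∀ n : ℕ, ∀ M : SL2Z, M ∈ CongruenceSubgroup.Gamma 2 →
    (M.1 0 0).natAbs + (M.1 1 0).natAbs ≤ n →
    projSL M ∈ (FreeGroup.lift ![Abar, Bbar]).range := by
  intro n
  induction n using Nat.strong_induction_on with
  | _ n ih =>
  intro M hM hn
  obtain ⟨ha, hb, hc, hd⟩ := gamma2_entries hM
  have hdet := detM M
  by_cases hc0 : M.1 1 0 = 0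
  · -- upper triangular case
    have had : M.1 0 0 * M.1 1 1 = 1 := by linear_combination hdet + M.1 0 1 * hc0
    obtain ⟨m, hm⟩ : (2:ℤ) ∣ M.1 0 1 := hb
    rcases Int.eq_one_or_neg_one_of_mul_eq_one' had with ⟨h1, h2⟩ | ⟨h1, h2⟩
    · have : M = matA ^ m := by
        apply Subtype.ext
        rw [matA_zpow, Matrix.eta_fin_two M.1, h1, h2, hc0, hm]
      rw [this]
      exact projSL_zpowA_mem m
    · have : M = -(matA ^ (-m)) := by
        apply Subtype.ext
        rw [Matrix.SpecialLinearGroup.coe_neg, matA_zpow, Matrix.eta_fin_two M.1,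
          h1, h2, hc0, hm]
        norm_num
      rw [this, projSL_neg]
      exact projSL_zpowA_mem (-m)
  · -- reduction case
    have haodd : M.1 0 0 % 2 = 1 := by omega
    have hceven : M.1 1 0 % 2 = 0 := by omega
    have ha0 : M.1 0 0 ≠ 0 := by omega
    by_cases hlt : (M.1 1 0).natAbs < (M.1 0 0).natAbs
    · -- reduce the top-left entry using A
      obtain ⟨k, hk⟩ := exists_red (M.1 0 0) (M.1 1 0) hc0 (by omega)
      set M' := matA ^ k * M with hM'
      have hM'mem : M' ∈ CongruenceSubgroup.Gamma 2 :=
        mul_mem (zpow_mem matA_mem_Gamma2 k) hM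
      have key : ∀ i j, M'.1 i j = (matA ^ k).1 i 0 * M.1 0 j + (matA ^ k).1 i 1 * M.1 1 j := by
        intro i j
        rw [hM', Matrix.SpecialLinearGroup.coe_mul, Matrix.mul_apply, Fin.sum_univ_two]
      have e00 : M'.1 0 0 = M.1 0 0 + 2 * k * M.1 1 0 := by
        rw [key]; rw [matA_zpow]; norm_num; try ring
      have e10 : M'.1 1 0 = M.1 1 0 := by
        rw [key]; rw [matA_zpow]; norm_num
      have hrec : projSL M' ∈ (FreeGroup.lift ![Abar, Bbar]).range := by
        apply ih ((M'.1 0 0).natAbs + (M'.1 1 0).natAbs) _ M' hM'mem le_rfl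
        rw [e00, e10]
        omega
      obtain ⟨w, hw⟩ := hrec
      refine ⟨(FreeGroup.of 0) ^ (-k) * w, ?_⟩
      rw [map_mul, hw, map_zpow, FreeGroup.lift_apply_of]
      show (![Abar, Bbar] 0) ^ (-k) * _ = _
      rw [show (![Abar, Bbar] 0) = Abar from rfl, Abar, ← map_zpow, ← map_mul, hM',
        zpow_neg, inv_mul_cancel_left]
    · -- reduce the bottom-left entry using B
      have hne : (M.1 0 0).natAbs ≠ (M.1 1 0).natAbs := by omega
      obtain ⟨k, hk⟩ := exists_red (M.1 1 0) (M.1 0 0) ha0 (by omega)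
      set M' := matB ^ k * M with hM'
      have hM'mem : M' ∈ CongruenceSubgroup.Gamma 2 :=
        mul_mem (zpow_mem matB_mem_Gamma2 k) hM
      have key : ∀ i j, M'.1 i j = (matB ^ k).1 i 0 * M.1 0 j + (matB ^ k).1 i 1 * M.1 1 j := by
        intro i j
        rw [hM', Matrix.SpecialLinearGroup.coe_mul, Matrix.mul_apply, Fin.sum_univ_two]
      have e00 : M'.1 0 0 = M.1 0 0 := by
        rw [key]; rw [matB_zpow]; norm_num
      have e10 : M'.1 1 0 = M.1 1 0 + 2 * k * M.1 0 0 := by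
        rw [key]; rw [matB_zpow]; norm_num; try ring
      have hrec : projSL M' ∈ (FreeGroup.lift ![Abar, Bbar]).range := by
        apply ih ((M'.1 0 0).natAbs + (M'.1 1 0).natAbs) _ M' hM'mem le_rfl
        rw [e00, e10]
        omega
      obtain ⟨w, hw⟩ := hrec
      refine ⟨(FreeGroup.of 1) ^ (-k) * w, ?_⟩
      rw [map_mul, hw, map_zpow, FreeGroup.lift_apply_of]
      show (![Abar, Bbar] 1) ^ (-k) * _ = _
      rw [show (![Abar, Bbar] 1) = Bbar from rfl, Bbar, ← map_zpow, ← map_mul, hM',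
        zpow_neg, inv_mul_cancel_left]

end Generation

/-- `Ā` and `B̄` freely generate `Γ̄(2)`: the homomorphism from the free group on two
generators sending them to `Ā` and `B̄` is injective with range exactly `Γ̄(2)`. -/
theorem gammaBar_two_free :
    Function.Injective (FreeGroup.lift ![Abar, Bbar]) ∧
      (FreeGroup.lift ![Abar, Bbar]).range = GammaBar 2 := by
  have hcomp : (FreeGroup.lift ![Abar, Bbar]) =
      projSL.comp (FreeGroup.lift ![matA, matB]) := by
    apply FreeGroup.ext_hom
    intro i
    fin_cases i <;> simp [Abar, Bbar]
  constructor
  · rw [injective_iff_map_eq_one]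
    intro w hw
    rw [hcomp, MonoidHom.comp_apply] at hw
    have hker : FreeGroup.lift ![matA, matB] w ∈ Subgroup.center SL2Z := by
      rwa [← QuotientGroup.ker_mk' (Subgroup.center SL2Z), MonoidHom.mem_ker]
    rcases center_cases hker with h | h
    · exact (injective_iff_map_eq_one _).mp liftSL_injective w h
    · exfalso
      have hP := Pm_lift w
      rw [h] at hP
      obtain ⟨⟨a, ha⟩, -, -, -⟩ := hP
      rw [Matrix.SpecialLinearGroup.coe_neg, Matrix.SpecialLinearGroup.coe_one] at ha
      simp only [Matrix.neg_apply, Matrix.one_apply_eq] at ha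
      omega
  · apply le_antisymm
    · rintro x ⟨w, rfl⟩
      rw [hcomp, MonoidHom.comp_apply]
      exact Subgroup.mem_map.mpr
        ⟨FreeGroup.lift ![matA, matB] w, Pm_mem_Gamma2 (Pm_lift w), rfl⟩
    · rintro x hx
      obtain ⟨M, hM, rfl⟩ := Subgroup.mem_map.mp hx
      exact gamma2_gen ((M.1 0 0).natAbs + (M.1 1 0).natAbs) M hM le_rfl
end

section
/- Let Γ be a finite-index congruence subgroup of PSL₂(ℤ) of level m, i.e., m is the smallest positive integer with Γ̄(m) ≤ Γ. Let d be the least positive integer such that T^d ∈ Γ, where T is the image of [[1,1],[0,1]] (the width of the cusp ∞), and let e be the least positive integer such that L^e ∈ Γ, where L is the image of [[1,0],[1,1]] (the width of the cusp 0). Then m divides d·e. -/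
section Helpers

variable {R : Type*} [CommRing R]

/-- Build an element of `SL(2,R)` from entries and a determinant identity. -/
def mkSL (a b c d : R) (h : a * d - b * c = 1) : Matrix.SpecialLinearGroup (Fin 2) R :=
  ⟨!![a, b; c, d], by rw [Matrix.det_fin_two_of]; exact h⟩

/-- Upper unipotent elementary matrix. -/
def eT (x : R) : Matrix.SpecialLinearGroup (Fin 2) R := mkSL 1 x 0 1 (by ring)

/-- Lower unipotent elementary matrix. -/
def eL (y : R) : Matrix.SpecialLinearGroup (Fin 2) R := mkSL 1 0 y 1 (by ring)

lemma eT_mul (x y : R) : eT x * eT y = eT (x + y) := by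
  apply Subtype.ext
  simp only [Matrix.SpecialLinearGroup.coe_mul]
  simp only [eT, mkSL, Matrix.mul_fin_two]
  congr 1 <;> ring

lemma eL_mul (x y : R) : eL x * eL y = eL (x + y) := by
  apply Subtype.ext
  simp only [Matrix.SpecialLinearGroup.coe_mul]
  simp only [eL, mkSL, Matrix.mul_fin_two]
  congr 1 <;> ring

lemma eT_zero : eT (0 : R) = 1 := by
  apply Subtype.ext
  ext i j
  fin_cases i <;> fin_cases j <;> simp [eT, mkSL]

lemma eL_zero : eL (0 : R) = 1 := by
  apply Subtype.ext
  ext i j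
  fin_cases i <;> fin_cases j <;> simp [eL, mkSL]

lemma eT_inv (x : R) : (eT x)⁻¹ = eT (-x) := by
  rw [inv_eq_iff_mul_eq_one, eT_mul, add_neg_cancel, eT_zero]

lemma eL_inv (x : R) : (eL x)⁻¹ = eL (-x) := by
  rw [inv_eq_iff_mul_eq_one, eL_mul, add_neg_cancel, eL_zero]

lemma eT_pow (x : R) (k : ℕ) : eT x ^ k = eT (k * x) := by
  induction k with
  | zero => simp [eT_zero]
  | succ n ih =>
    rw [pow_succ, ih, eT_mul]
    congr 1
    push_cast
    ring

lemma eL_pow (x : R) (k : ℕ) : eL x ^ k = eL (k * x) := by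
  induction k with
  | zero => simp [eL_zero]
  | succ n ih =>
    rw [pow_succ, ih, eL_mul]
    congr 1
    push_cast
    ring

lemma eT_zpow (x : R) (k : ℤ) : eT x ^ k = eT (k * x) := by
  cases k with
  | ofNat n => rw [Int.ofNat_eq_coe, zpow_natCast, eT_pow]; norm_num
  | negSucc n =>
    rw [zpow_negSucc, eT_pow, eT_inv]
    congr 1
    push_cast
    ring

lemma eL_zpow (x : R) (k : ℤ) : eL x ^ k = eL (k * x) := by
  cases k with
  | ofNat n => rw [Int.ofNat_eq_coe, zpow_natCast, eL_pow]; norm_num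
  | negSucc n =>
    rw [zpow_negSucc, eL_pow, eL_inv]
    congr 1
    push_cast
    ring

/-- The key matrix decomposition identity. -/
lemma key_decomp (d e α β γ δ x u' : R)
    (hdet : (1 + d*e*α) * (1 + d*e*δ) - d*e*β * (d*e*γ) = 1)
    (hu : (1 + d*e*α + d*x*(d*e*γ)) * u' = 1) :
    eL (e * (-(d*γ*u'))) * eT (d*x) * mkSL (1 + d*e*α) (d*e*β) (d*e*γ) (1 + d*e*δ) hdet *
      eT (d * (-((e*β + x*(1 + d*e*δ))*u'))) =
    eT (d*1) * eL (e*(α + d*x*γ)) * eT (d*(-u')) *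
      eL (e*(-((α + d*x*γ)*(1 + d*e*α + d*x*(d*e*γ))))) := by
  apply Subtype.ext
  simp only [Matrix.SpecialLinearGroup.coe_mul]
  simp only [eT, eL, mkSL]
  simp only [Matrix.mul_fin_two]
  ext i j
  fin_cases i <;> fin_cases j <;>
    simp only [Matrix.cons_val', Matrix.cons_val_zero, Matrix.cons_val_one, Matrix.head_cons,
      Matrix.empty_val', Matrix.cons_val_fin_one, Matrix.head_fin_const, Matrix.of_apply,
      Fin.mk_zero, Fin.mk_one]
  · linear_combination (-(d*e*(α + d*x*γ) + (d*e)^2*(α + d*x*γ)^2)) * hu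
  · linear_combination (d - d*(e*β + x*(1 + d*e*δ))) * hu
  · linear_combination (-(d*e*γ) - d*e^2*(α + d*x*γ)^2) * hu
  · linear_combination (-((1 + d*e*δ) + d*e*γ*(d*(-((e*β + x*(1 + d*e*δ))*u')))) + 1) * hu +
      u' * hdet

end Helpers

/-- If no prime dividing `n` divides both `a` and `b`, then some `a + b*x` is coprime to `n`. -/
lemma exists_coprime_add_mul (a b : ℤ) (n : ℕ) (hn : 0 < n)
    (h : ∀ p : ℕ, p.Prime → (p : ℤ) ∣ (n : ℤ) → (p : ℤ) ∣ a → ¬ (p : ℤ) ∣ b) :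
    ∃ x : ℤ, Int.gcd (a + b * x) (n : ℤ) = 1 := by
  classical
  set F : Finset ℕ := n.primeFactors.filter (fun p => ¬ (p : ℤ) ∣ a) with hF
  refine ⟨F.prod (fun p => (p : ℤ)), ?_⟩
  set x : ℤ := F.prod (fun p => (p : ℤ)) with hx
  by_contra hg
  obtain ⟨q, hq, hqd⟩ := Nat.exists_prime_and_dvd hg
  have hqZ : Prime (q : ℤ) := Int.prime_iff_natAbs_prime.mpr (by simpa)
  have hq1 : (q : ℤ) ∣ a + b * x :=
    dvd_trans (Int.natCast_dvd_natCast.mpr hqd) (Int.gcd_dvd_left _ _)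
  have hq2 : (q : ℤ) ∣ (n : ℤ) :=
    dvd_trans (Int.natCast_dvd_natCast.mpr hqd) (Int.gcd_dvd_right _ _)
  by_cases hqa : (q : ℤ) ∣ a
  · have hqb : ¬ (q : ℤ) ∣ b := h q hq hq2 hqa
    have hqx : ¬ (q : ℤ) ∣ x := by
      intro hdvd
      rw [hx] at hdvd
      obtain ⟨p, hp, hqp⟩ := (Prime.dvd_finset_prod_iff hqZ _).mp hdvd
      have hqp' : q ∣ p := Int.natCast_dvd_natCast.mp hqp
      rw [Nat.prime_dvd_prime_iff_eq hq (Nat.prime_of_mem_primeFactors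
        (Finset.mem_filter.mp hp).1)] at hqp'
      exact (Finset.mem_filter.mp hp).2 (hqp' ▸ hqa)
    have hbx : (q : ℤ) ∣ b * x := (dvd_add_right hqa).mp hq1
    rcases hqZ.dvd_mul.mp hbx with h' | h'
    · exact hqb h'
    · exact hqx h'
  · have hqx : (q : ℤ) ∣ x := by
      rw [hx]
      refine Finset.dvd_prod_of_mem _ ?_
      exact Finset.mem_filter.mpr
        ⟨Nat.mem_primeFactors.mpr ⟨hq, by exact_mod_cast hq2, hn.ne'⟩, hqa⟩
    have : (q : ℤ) ∣ a := by
      have := dvd_sub hq1 (hqx.mul_left b)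
      simpa using this
    exact hqa this

/-- Larcher's theorem: if `Γ` is a finite-index congruence subgroup of `PSL₂(ℤ)` of level `m`,
`d` is the width of the cusp `∞` and `e` is the width of the cusp `0`, then `m ∣ d·e`. -/
theorem larcher_infty_zero (Γ : Subgroup PSL2Z) (hfin : Γ.index ≠ 0) (m d e : ℕ)
    (hm : IsLeast {N : ℕ | 0 < N ∧ GammaBar N ≤ Γ} m)
    (hd : IsLeast {k : ℕ | 0 < k ∧ projSL matT ^ k ∈ Γ} d)
    (he : IsLeast {k : ℕ | 0 < k ∧ projSL matL ^ k ∈ Γ} e) :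
    m ∣ d * e := by
  obtain ⟨⟨hm0, hmle⟩, hmin⟩ := hm
  set g := Nat.gcd m (d * e) with hgdef
  suffices hsub : GammaBar g ≤ Γ by
    have hgpos : 0 < g := Nat.gcd_pos_of_pos_left _ hm0
    have h1 : m ≤ g := hmin ⟨hgpos, hsub⟩
    have h2 : g ∣ m := Nat.gcd_dvd_left _ _
    have h3 : g = m := le_antisymm (Nat.le_of_dvd hm0 h2) h1
    rw [← h3]
    exact Nat.gcd_dvd_right _ _
  -- Work in SL(2, ℤ) with the preimage subgroup.
  set Γ' : Subgroup SL2Z := Γ.comap projSL with hΓ'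
  have hGm : CongruenceSubgroup.Gamma m ≤ Γ' := Subgroup.map_le_iff_le_comap.mp hmle
  have hTd : matT ^ d ∈ Γ' := by
    have : projSL (matT ^ d) ∈ Γ := by rw [map_pow]; exact hd.1.2
    exact this
  have hLe : matL ^ e ∈ Γ' := by
    have : projSL (matL ^ e) ∈ Γ := by rw [map_pow]; exact he.1.2
    exact this
  show (CongruenceSubgroup.Gamma g).map projSL ≤ Γ
  rw [Subgroup.map_le_iff_le_comap]
  intro γ hγ
  haveI : NeZero m := ⟨hm0.ne'⟩
  -- Reduction mod m.
  set R := ZMod m with hR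
  set φ : SL2Z →* Matrix.SpecialLinearGroup (Fin 2) R :=
    Matrix.SpecialLinearGroup.map (Int.castRingHom R) with hφ
  set H : Subgroup (Matrix.SpecialLinearGroup (Fin 2) R) := Γ'.map φ with hH
  -- It suffices to prove φ γ ∈ H.
  suffices hφγ : φ γ ∈ H by
    obtain ⟨B, hB, hBeq⟩ := hφγ
    have hker : B⁻¹ * γ ∈ CongruenceSubgroup.Gamma m := by
      have : φ (B⁻¹ * γ) = 1 := by rw [map_mul, map_inv, hBeq, inv_mul_cancel]
      exact this
    have : γ = B * (B⁻¹ * γ) := by group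
    rw [this]
    exact mul_mem hB (hGm hker)
  -- Generators of H.
  have hTH : ∀ r : R, eT ((d : R) * r) ∈ H := by
    intro r
    obtain ⟨k, rfl⟩ := ZMod.intCast_surjective r
    have h1 : φ (matT ^ d) = eT ((d : ℕ) * (1 : R)) := by
      rw [map_pow, ← eT_pow]
      congr 1
      apply Subtype.ext
      ext i j
      simp only [hφ, Matrix.SpecialLinearGroup.map_apply_coe]
      fin_cases i <;> fin_cases j <;> simp [matT, eT, mkSL, hφ]
    have h2 : eT ((d : R) * (k : R)) = φ (matT ^ d) ^ k := by
      rw [h1, eT_zpow]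
      congr 1
      push_cast
      ring
    rw [h2]
    exact Subgroup.zpow_mem H ⟨matT ^ d, hTd, rfl⟩ k
  have hLH : ∀ r : R, eL ((e : R) * r) ∈ H := by
    intro r
    obtain ⟨k, rfl⟩ := ZMod.intCast_surjective r
    have h1 : φ (matL ^ e) = eL ((e : ℕ) * (1 : R)) := by
      rw [map_pow, ← eL_pow]
      congr 1
      apply Subtype.ext
      ext i j
      simp only [hφ, Matrix.SpecialLinearGroup.map_apply_coe]
      fin_cases i <;> fin_cases j <;> simp [matL, eL, mkSL, hφ]
    have h2 : eL ((e : R) * (k : R)) = φ (matL ^ e) ^ k := by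
      rw [h1, eL_zpow]
      congr 1
      push_cast
      ring
    rw [h2]
    exact Subgroup.zpow_mem H ⟨matL ^ e, hLe, rfl⟩ k
  -- Integer entries of γ and their congruences mod g.
  obtain ⟨h00, h01, h10, h11⟩ := CongruenceSubgroup.Gamma_mem.mp hγ
  have d00 : (g : ℤ) ∣ (γ 0 0 - 1) := by
    rw [← ZMod.intCast_zmod_eq_zero_iff_dvd]
    push_cast
    rw [h00]
    ring
  have d01 : (g : ℤ) ∣ γ 0 1 := by
    rw [← ZMod.intCast_zmod_eq_zero_iff_dvd]; exact h01
  have d10 : (g : ℤ) ∣ γ 1 0 := by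
    rw [← ZMod.intCast_zmod_eq_zero_iff_dvd]; exact h10
  have d11 : (g : ℤ) ∣ (γ 1 1 - 1) := by
    rw [← ZMod.intCast_zmod_eq_zero_iff_dvd]
    push_cast
    rw [h11]
    ring
  obtain ⟨kA, hkA⟩ := d00
  obtain ⟨kB, hkB⟩ := d01
  obtain ⟨kC, hkC⟩ := d10
  obtain ⟨kD, hkD⟩ := d11
  have hdetZ : γ 0 0 * γ 1 1 - γ 0 1 * γ 1 0 = 1 := by
    have h := γ.2
    rw [Matrix.det_fin_two] at h
    exact h
  -- Choose x making the (0,0)-entry a unit mod m.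
  have hx : ∃ X : ℤ, Int.gcd (γ 0 0 + ((d : ℤ) * γ 1 0) * X) (m : ℤ) = 1 := by
    apply exists_coprime_add_mul _ _ m hm0
    intro p hp hpm hpa hpb
    have hpZ : Prime (p : ℤ) := Int.prime_iff_natAbs_prime.mpr (by simpa)
    have hp1 : (p : ℤ) ∣ 1 := by
      rcases hpZ.dvd_mul.mp hpb with h' | h'
      · -- p ∣ d, so p ∣ g and p ∣ γ 0 0 - 1.
        have hpg : (p : ℤ) ∣ (g : ℤ) := by
          have hpd : p ∣ d := by exact_mod_cast h'
          have : p ∣ g := Nat.dvd_gcd (by exact_mod_cast hpm) (hpd.mul_right e)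
          exact_mod_cast this
        have hpd1 : (p : ℤ) ∣ γ 0 0 - 1 := by
          rw [hkA]; exact hpg.mul_right kA
        have h2 : (p : ℤ) ∣ γ 0 0 - (γ 0 0 - 1) := dvd_sub hpa hpd1
        simpa using h2
      · rw [← hdetZ]
        exact dvd_sub (hpa.mul_right _) (h'.mul_left _)
    have : p ∣ 1 := by exact_mod_cast hp1
    exact hp.one_lt.ne' (Nat.dvd_one.mp this)
  obtain ⟨X, hX⟩ := hx
  have hco : IsCoprime (γ 0 0 + ((d : ℤ) * γ 1 0) * X) (m : ℤ) :=
    Int.isCoprime_iff_gcd_eq_one.mpr hX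
  obtain ⟨U, V, hUV⟩ := hco
  -- The unit's inverse mod m.
  set u' : R := ((U : ℤ) : R) with hu'def
  have hUinv : ((γ 0 0 + ((d : ℤ) * γ 1 0) * X : ℤ) : R) * u' = 1 := by
    have := congrArg (fun t : ℤ => ((t : R))) hUV
    push_cast +zetaDelta at this
    rw [ZMod.natCast_self] at this
    simp only [mul_zero, add_zero, mul_comm] at this
    rw [hu'def]
    push_cast +zetaDelta
    linear_combination this
  -- Bezout for g = gcd(m, d*e).
  have hBez : (g : ℤ) = (m : ℤ) * Nat.gcdA m (d * e) + ((d : ℤ) * (e : ℤ)) * Nat.gcdB m (d * e) := by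
    have := Nat.gcd_eq_gcd_ab m (d * e)
    push_cast at this ⊢
    linarith [this]
  set bA : ℤ := Nat.gcdA m (d * e) with hbA
  set bB : ℤ := Nat.gcdB m (d * e) with hbB
  -- R-parameters.
  set α : R := ((bB * kA : ℤ) : R) with hα
  set β : R := ((bB * kB : ℤ) : R) with hβ
  set γc : R := ((bB * kC : ℤ) : R) with hγc
  set δ : R := ((bB * kD : ℤ) : R) with hδ
  set x : R := ((X : ℤ) : R) with hxR
  have hmR : ((m : ℤ) : R) = 0 := by
    push_cast
    exact ZMod.natCast_self m
  have hmR0 : ((m : ℕ) : R) = 0 := ZMod.natCast_self m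
  have e00 : ((γ 0 0 : ℤ) : R) = 1 + (d : R) * (e : R) * α := by
    have hZ : (γ 0 0 : ℤ) = 1 + (m : ℤ) * (bA * kA) + ((d : ℤ) * (e : ℤ)) * (bB * kA) := by
      have : γ 0 0 = 1 + (g : ℤ) * kA := by linarith [hkA]
      rw [this, hBez]; ring
    rw [hZ, hα]
    push_cast +zetaDelta [hmR0]
    ring
  have e01 : ((γ 0 1 : ℤ) : R) = (d : R) * (e : R) * β := by
    have hZ : (γ 0 1 : ℤ) = (m : ℤ) * (bA * kB) + ((d : ℤ) * (e : ℤ)) * (bB * kB) := by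
      rw [hkB, hBez]; ring
    rw [hZ, hβ]
    push_cast +zetaDelta [hmR0]
    ring
  have e10 : ((γ 1 0 : ℤ) : R) = (d : R) * (e : R) * γc := by
    have hZ : (γ 1 0 : ℤ) = (m : ℤ) * (bA * kC) + ((d : ℤ) * (e : ℤ)) * (bB * kC) := by
      rw [hkC, hBez]; ring
    rw [hZ, hγc]
    push_cast +zetaDelta [hmR0]
    ring
  have e11 : ((γ 1 1 : ℤ) : R) = 1 + (d : R) * (e : R) * δ := by
    have hZ : (γ 1 1 : ℤ) = 1 + (m : ℤ) * (bA * kD) + ((d : ℤ) * (e : ℤ)) * (bB * kD) := by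
      have : γ 1 1 = 1 + (g : ℤ) * kD := by linarith [hkD]
      rw [this, hBez]; ring
    rw [hZ, hδ]
    push_cast +zetaDelta [hmR0]
    ring
  -- Determinant and unit relations in R.
  have hdet2 : (1 + (d:R)*(e:R)*α) * (1 + (d:R)*(e:R)*δ) - (d:R)*(e:R)*β * ((d:R)*(e:R)*γc) = 1 := by
    rw [← e00, ← e01, ← e10, ← e11]
    have := congrArg (fun t : ℤ => ((t : R))) hdetZ
    push_cast +zetaDelta at this
    linear_combination this
  have hu2 : (1 + (d:R)*(e:R)*α + (d:R)*x*((d:R)*(e:R)*γc)) * u' = 1 := by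
    rw [← e00, ← e10]
    have : ((γ 0 0 + ((d : ℤ) * γ 1 0) * X : ℤ) : R) =
        ((γ 0 0 : ℤ) : R) + (d:R)*x*(((γ 1 0 : ℤ) : R)) := by
      push_cast
      rw [hxR]
      push_cast +zetaDelta
      ring
    rw [← this]
    exact hUinv
  -- Express φ γ as the special matrix.
  have hMat : φ γ = mkSL (1 + (d:R)*(e:R)*α) ((d:R)*(e:R)*β) ((d:R)*(e:R)*γc)
      (1 + (d:R)*(e:R)*δ) hdet2 := by
    apply Subtype.ext
    ext i j
    fin_cases i <;> fin_cases j <;>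
      simp only [hφ, Matrix.SpecialLinearGroup.map, RingHom.mapMatrix_apply,
        MonoidHom.coe_mk, OneHom.coe_mk, Matrix.map_apply, Int.coe_castRingHom, mkSL]
    · exact e00.trans (by simp)
    · exact e01.trans (by simp)
    · exact e10.trans (by simp)
    · exact e11.trans (by simp)
  -- Apply the key decomposition.
  have hkey := key_decomp (d:R) (e:R) α β γc δ x u' hdet2 hu2
  rw [← hMat] at hkey
  have hWmem : eT ((d:R)*1) * eL ((e:R)*(α + (d:R)*x*γc)) * eT ((d:R)*(-u')) *
      eL ((e:R)*(-((α + (d:R)*x*γc)*(1 + (d:R)*(e:R)*α + (d:R)*x*((d:R)*(e:R)*γc))))) ∈ H :=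
    mul_mem (mul_mem (mul_mem (hTH 1) (hLH _)) (hTH _)) (hLH _)
  rw [← hkey] at hWmem
  have hrw : φ γ = (eT ((d:R)*x))⁻¹ * (eL ((e:R) * (-((d:R)*γc*u'))))⁻¹ *
      (eL ((e:R) * (-((d:R)*γc*u'))) * eT ((d:R)*x) * φ γ *
        eT ((d:R) * (-(((e:R)*β + x*(1 + (d:R)*(e:R)*δ))*u')))) *
      (eT ((d:R) * (-(((e:R)*β + x*(1 + (d:R)*(e:R)*δ))*u'))))⁻¹ := by
    group
  rw [hrw]
  exact mul_mem (mul_mem (mul_mem (inv_mem (hTH x)) (inv_mem (hLH _))) hWmem)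
    (inv_mem (hTH _))
end

section
/- Let Γ be a finite-index subgroup of Γ̄(2) in PSL₂(ℤ) which is congruence of level 2n, i.e., 2n is the smallest positive integer N with Γ̄(N) ≤ Γ. Let d be the least positive integer with Ā^d ∈ Γ and e the least positive integer with B̄^e ∈ Γ. Then n divides 2·d·e. -/
namespace LarcherAux

open Matrix CongruenceSubgroup Subgroup

/-! ### Elementary matrices -/

def E12 (x : ℤ) : SL2Z := ⟨!![1, x; 0, 1], by simp [Matrix.det_fin_two_of]⟩

def E21 (x : ℤ) : SL2Z := ⟨!![1, 0; x, 1], by simp [Matrix.det_fin_two_of]⟩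

@[simp] lemma E12_coe (x : ℤ) : (E12 x : Matrix (Fin 2) (Fin 2) ℤ) = !![1, x; 0, 1] := rfl

@[simp] lemma E21_coe (x : ℤ) : (E21 x : Matrix (Fin 2) (Fin 2) ℤ) = !![1, 0; x, 1] := rfl

lemma E12_mul (x y : ℤ) : E12 x * E12 y = E12 (x + y) := by
  ext i j
  simp only [Matrix.SpecialLinearGroup.coe_mul, E12_coe, Matrix.mul_fin_two]
  fin_cases i <;> fin_cases j <;> simp <;> ring

lemma E21_mul (x y : ℤ) : E21 x * E21 y = E21 (x + y) := by
  ext i j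
  simp only [Matrix.SpecialLinearGroup.coe_mul, E21_coe, Matrix.mul_fin_two]
  fin_cases i <;> fin_cases j <;> simp <;> ring

lemma E12_zero : E12 0 = 1 := by
  ext i j
  simp only [E12_coe, Matrix.SpecialLinearGroup.coe_one, Matrix.one_fin_two]

lemma E21_zero : E21 0 = 1 := by
  ext i j
  simp only [E21_coe, Matrix.SpecialLinearGroup.coe_one, Matrix.one_fin_two]

lemma E12_inv (x : ℤ) : (E12 x)⁻¹ = E12 (-x) := by
  apply inv_eq_of_mul_eq_one_right
  rw [E12_mul]; simp [E12_zero]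

lemma E21_inv (x : ℤ) : (E21 x)⁻¹ = E21 (-x) := by
  apply inv_eq_of_mul_eq_one_right
  rw [E21_mul]; simp [E21_zero]

lemma E12_pow (x : ℤ) (k : ℕ) : E12 x ^ k = E12 (x * k) := by
  induction k with
  | zero => simp [E12_zero]
  | succ k ih =>
      rw [pow_succ, ih, E12_mul]
      congr 1
      push_cast
      ring

lemma E21_pow (x : ℤ) (k : ℕ) : E21 x ^ k = E21 (x * k) := by
  induction k with
  | zero => simp [E21_zero]
  | succ k ih =>
      rw [pow_succ, ih, E21_mul]
      congr 1
      push_cast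
      ring

lemma E12_zpow (x : ℤ) (k : ℤ) : E12 x ^ k = E12 (x * k) := by
  cases k with
  | ofNat k => simpa using E12_pow x k
  | negSucc k =>
      rw [zpow_negSucc, E12_pow, E12_inv]
      congr 1
      simp [Int.negSucc_eq]
      ring

lemma E21_zpow (x : ℤ) (k : ℤ) : E21 x ^ k = E21 (x * k) := by
  cases k with
  | ofNat k => simpa using E21_pow x k
  | negSucc k =>
      rw [zpow_negSucc, E21_pow, E21_inv]
      congr 1
      simp [Int.negSucc_eq]
      ring

lemma matA_eq : matA = E12 2 := Subtype.ext rfl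

lemma matB_eq : matB = E21 2 := Subtype.ext rfl

/-! ### Congruences between integral matrices -/

def SLCong (N : ℤ) (γ δ : SL2Z) : Prop := ∀ i j, N ∣ (γ i j - δ i j)

lemma SLCong.refl (N : ℤ) (γ : SL2Z) : SLCong N γ γ := fun i j => by simp

lemma SLCong.symm {N : ℤ} {γ δ : SL2Z} (h : SLCong N γ δ) : SLCong N δ γ :=
  fun i j => (dvd_sub_comm).mp (h i j)

lemma SLCong.trans {N : ℤ} {γ δ ε : SL2Z} (h₁ : SLCong N γ δ) (h₂ : SLCong N δ ε) :
    SLCong N γ ε := by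
  intro i j
  have := dvd_add (h₁ i j) (h₂ i j)
  simpa using this

lemma SLCong.mul {N : ℤ} {γ₁ δ₁ γ₂ δ₂ : SL2Z} (h₁ : SLCong N γ₁ δ₁) (h₂ : SLCong N γ₂ δ₂) :
    SLCong N (γ₁ * γ₂) (δ₁ * δ₂) := by
  intro i j
  have key : ∀ a A b B : ℤ, N ∣ a - A → N ∣ b - B → N ∣ a * b - A * B := by
    rintro a A b B ⟨u, hu⟩ ⟨v, hv⟩
    exact ⟨u * b + A * v, by linear_combination b * hu + A * hv⟩
  have e1 : (γ₁ * γ₂) i j = γ₁ i 0 * γ₂ 0 j + γ₁ i 1 * γ₂ 1 j := by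
    show ((γ₁ * γ₂ : SL2Z) : Matrix (Fin 2) (Fin 2) ℤ) i j = _
    rw [Matrix.SpecialLinearGroup.coe_mul, Matrix.mul_apply, Fin.sum_univ_two]
  have e2 : (δ₁ * δ₂) i j = δ₁ i 0 * δ₂ 0 j + δ₁ i 1 * δ₂ 1 j := by
    show ((δ₁ * δ₂ : SL2Z) : Matrix (Fin 2) (Fin 2) ℤ) i j = _
    rw [Matrix.SpecialLinearGroup.coe_mul, Matrix.mul_apply, Fin.sum_univ_two]
  rw [e1, e2]
  have := dvd_add (key _ _ _ _ (h₁ i 0) (h₂ 0 j)) (key _ _ _ _ (h₁ i 1) (h₂ 1 j))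
  refine (congrArg (N ∣ ·) ?_).mpr this
  ring

lemma SLCong.of_dvd {N M : ℤ} {γ δ : SL2Z} (h : M ∣ N) (hc : SLCong N γ δ) : SLCong M γ δ :=
  fun i j => dvd_trans h (hc i j)

lemma SLCong.inv_one {N : ℤ} {γ : SL2Z} (h : SLCong N γ 1) : SLCong N γ⁻¹ 1 := by
  have h2 := (SLCong.refl N γ⁻¹).mul h
  rw [inv_mul_cancel, mul_one] at h2
  exact h2.symm

lemma one_entry (i j : Fin 2) : (1 : SL2Z) i j = if i = j then 1 else 0 := by
  show ((1 : SL2Z) : Matrix (Fin 2) (Fin 2) ℤ) i j = _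
  rw [Matrix.SpecialLinearGroup.coe_one, Matrix.one_apply]

lemma Gamma_iff (N : ℕ) (γ : SL2Z) : γ ∈ Gamma N ↔ SLCong (N : ℤ) γ 1 := by
  rw [Gamma_mem]
  constructor
  · rintro ⟨h₁, h₂, h₃, h₄⟩ i j
    fin_cases i <;> fin_cases j <;>
      simp only [one_entry, if_pos rfl, if_neg (by decide : (0 : Fin 2) ≠ 1),
        if_neg (by decide : (1 : Fin 2) ≠ 0), reduceIte] <;>
      [skip; skip; skip; skip]
    · have : ((γ 0 0 - 1 : ℤ) : ZMod N) = 0 := by push_cast [h₁]; ring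
      exact (ZMod.intCast_zmod_eq_zero_iff_dvd _ _).mp this
    · have : ((γ 0 1 - 0 : ℤ) : ZMod N) = 0 := by push_cast [h₂]; ring
      exact (ZMod.intCast_zmod_eq_zero_iff_dvd _ _).mp this
    · have : ((γ 1 0 - 0 : ℤ) : ZMod N) = 0 := by push_cast [h₃]; ring
      exact (ZMod.intCast_zmod_eq_zero_iff_dvd _ _).mp this
    · have : ((γ 1 1 - 1 : ℤ) : ZMod N) = 0 := by push_cast [h₄]; ring
      exact (ZMod.intCast_zmod_eq_zero_iff_dvd _ _).mp this
  · intro h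
    have g : ∀ i j, ((γ i j - (1 : SL2Z) i j : ℤ) : ZMod N) = 0 :=
      fun i j => (ZMod.intCast_zmod_eq_zero_iff_dvd _ _).mpr (h i j)
    have g00 := g 0 0; have g01 := g 0 1; have g10 := g 1 0; have g11 := g 1 1
    rw [one_entry] at g00 g01 g10 g11
    simp only [if_pos rfl, if_neg (by decide : (0 : Fin 2) ≠ 1),
      if_neg (by decide : (1 : Fin 2) ≠ 0), reduceIte] at g00 g01 g10 g11
    push_cast at g00 g01 g10 g11
    refine ⟨?_, ?_, ?_, ?_⟩ <;> [linear_combination g00; linear_combination g01;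
      linear_combination g10; linear_combination g11]

/-! ### Entry computation helpers -/

@[simp] lemma E12_00 (x : ℤ) : E12 x 0 0 = 1 := rfl
@[simp] lemma E12_01 (x : ℤ) : E12 x 0 1 = x := rfl
@[simp] lemma E12_10 (x : ℤ) : E12 x 1 0 = 0 := rfl
@[simp] lemma E12_11 (x : ℤ) : E12 x 1 1 = 1 := rfl
@[simp] lemma E21_00 (x : ℤ) : E21 x 0 0 = 1 := rfl
@[simp] lemma E21_01 (x : ℤ) : E21 x 0 1 = 0 := rfl
@[simp] lemma E21_10 (x : ℤ) : E21 x 1 0 = x := rfl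
@[simp] lemma E21_11 (x : ℤ) : E21 x 1 1 = 1 := rfl

@[simp] lemma one_00 : (1 : SL2Z) 0 0 = 1 := by rw [one_entry]; simp
@[simp] lemma one_01 : (1 : SL2Z) 0 1 = 0 := by rw [one_entry]; simp
@[simp] lemma one_10 : (1 : SL2Z) 1 0 = 0 := by rw [one_entry]; simp
@[simp] lemma one_11 : (1 : SL2Z) 1 1 = 1 := by rw [one_entry]; simp

lemma mul_entry (γ δ : SL2Z) (i j : Fin 2) :
    (γ * δ) i j = γ i 0 * δ 0 j + γ i 1 * δ 1 j := by
  show ((γ * δ : SL2Z) : Matrix (Fin 2) (Fin 2) ℤ) i j = _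
  rw [Matrix.SpecialLinearGroup.coe_mul, Matrix.mul_apply, Fin.sum_univ_two]

lemma det_entry (γ : SL2Z) : γ 0 0 * γ 1 1 - γ 0 1 * γ 1 0 = 1 := by
  have h := γ.2
  rw [Matrix.det_fin_two] at h
  exact h

lemma SLCong_of_four {N : ℤ} {γ δ : SL2Z} (h00 : N ∣ γ 0 0 - δ 0 0)
    (h01 : N ∣ γ 0 1 - δ 0 1) (h10 : N ∣ γ 1 0 - δ 1 0) (h11 : N ∣ γ 1 1 - δ 1 1) :
    SLCong N γ δ := by
  intro i j
  fin_cases i <;> fin_cases j <;> assumption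

/-! ### The auxiliary subgroup -/

def GammaStar (n d e : ℕ) : Subgroup SL2Z :=
  Subgroup.closure ({matA ^ d, matB ^ e} ∪ (Gamma (2 * n) : Subgroup SL2Z))

lemma E12_memStar (n d e : ℕ) (k : ℤ) : E12 (2 * (d : ℤ) * k) ∈ GammaStar n d e := by
  have h : matA ^ d ∈ GammaStar n d e :=
    Subgroup.subset_closure (Set.mem_union_left _ (by simp))
  have h2 := zpow_mem h k
  rwa [matA_eq, E12_pow, E12_zpow] at h2

lemma E21_memStar (n d e : ℕ) (k : ℤ) : E21 (2 * (e : ℤ) * k) ∈ GammaStar n d e := by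
  have h : matB ^ e ∈ GammaStar n d e :=
    Subgroup.subset_closure (Set.mem_union_left _ (by simp))
  have h2 := zpow_mem h k
  rwa [matB_eq, E21_pow, E21_zpow] at h2

lemma Gamma_le_Star (n d e : ℕ) : (Gamma (2 * n) : Subgroup SL2Z) ≤ GammaStar n d e :=
  fun _ hγ => Subgroup.subset_closure (Set.mem_union_right _ hγ)

/-! ### Elimination modulo a prime not dividing m -/

lemma elim_modp (m : ℤ) (p : ℕ) (pp : p.Prime) (hpm : ¬(p : ℤ) ∣ m) (γ : SL2Z) :
    ∃ w ∈ Subgroup.closure ({E12 m, E21 m} : Set SL2Z), SLCong (p : ℤ) γ w := by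
  have hp : Prime (p : ℤ) := Nat.prime_iff_prime_int.mp pp
  obtain ⟨a0, b0, hab⟩ := hp.coprime_iff_not_dvd.mpr hpm
  have hmm' : (p : ℤ) ∣ m * b0 - 1 := ⟨-a0, by linear_combination hab⟩
  have main : ∀ δ : SL2Z, ¬(p : ℤ) ∣ δ 1 0 →
      ∃ w ∈ Subgroup.closure ({E12 m, E21 m} : Set SL2Z), SLCong (p : ℤ) δ w := by
    intro δ hc
    obtain ⟨a1, b1, hab1⟩ := hp.coprime_iff_not_dvd.mpr hc
    have hcc : (p : ℤ) ∣ δ 1 0 * b1 - 1 := ⟨-a1, by linear_combination hab1⟩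
    set j₁ : ℤ := b0 * b1 * (1 - δ 0 0) with hj₁
    set j₂ : ℤ := -(b0 * δ 1 0) with hj₂
    set A : ℤ := δ 0 0 + m * j₁ * δ 1 0 with hA
    set B : ℤ := δ 0 1 + m * j₁ * δ 1 1 with hB
    set j₃ : ℤ := -(b0 * B) with hj₃
    set e₁ : SL2Z := E12 (m * j₁) with he₁
    set e₂ : SL2Z := E21 (m * j₂) with he₂
    set e₃ : SL2Z := E12 (m * j₃) with he₃
    set P : SL2Z := e₂ * (e₁ * δ) * e₃ with hPdef
    have hP00 : P 0 0 = A := by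
      rw [hPdef, he₁, he₂, he₃, hA]; simp [mul_entry]; try ring
    have hP01 : P 0 1 = A * (m * j₃) + B := by
      rw [hPdef, he₁, he₂, he₃, hA, hB]; simp [mul_entry]; try ring
    have hP10 : P 1 0 = m * j₂ * A + δ 1 0 := by
      rw [hPdef, he₁, he₂, he₃, hA]; simp [mul_entry]; try ring
    have hP11 : P 1 1 = (m * j₂ * A + δ 1 0) * (m * j₃) + (m * j₂ * B + δ 1 1) := by
      rw [hPdef, he₁, he₂, he₃, hA, hB]; simp [mul_entry]; try ring
    have hA1 : (p : ℤ) ∣ A - 1 := by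
      have h2 : (p : ℤ) ∣ m * b0 * (δ 1 0 * b1) - 1 := by
        have h3 := dvd_add (hmm'.mul_right (δ 1 0 * b1)) hcc
        refine (congrArg ((p : ℤ) ∣ ·) ?_).mpr h3; ring
      have h4 : A - 1 = (m * b0 * (δ 1 0 * b1) - 1) * (1 - δ 0 0) := by
        rw [hA, hj₁]; ring
      rw [h4]; exact h2.mul_right _
    have hMB : (p : ℤ) ∣ m * b0 * A - 1 := by
      have h3 := dvd_add (hmm'.mul_right A) hA1
      refine (congrArg ((p : ℤ) ∣ ·) ?_).mpr h3; ring
    have hP01' : (p : ℤ) ∣ A * (m * j₃) + B := by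
      have h4 : A * (m * j₃) + B = -((m * b0 * A - 1) * B) := by rw [hj₃]; ring
      rw [h4]; exact dvd_neg.mpr (hMB.mul_right B)
    have hP10' : (p : ℤ) ∣ m * j₂ * A + δ 1 0 := by
      have h4 : m * j₂ * A + δ 1 0 = -((m * b0 * A - 1) * δ 1 0) := by rw [hj₂]; ring
      rw [h4]; exact dvd_neg.mpr (hMB.mul_right _)
    have hP11' : (p : ℤ) ∣ (m * j₂ * A + δ 1 0) * (m * j₃) + (m * j₂ * B + δ 1 1) - 1 := by
      have hdetP := det_entry P
      rw [hP00, hP01, hP10, hP11] at hdetP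
      have h5 := dvd_sub (hP01'.mul_right (m * j₂ * A + δ 1 0))
        (hA1.mul_right ((m * j₂ * A + δ 1 0) * (m * j₃) + (m * j₂ * B + δ 1 1)))
      refine (congrArg ((p : ℤ) ∣ ·) ?_).mpr h5
      linear_combination hdetP
    have hPcong : SLCong (p : ℤ) P 1 := by
      refine SLCong_of_four ?_ ?_ ?_ ?_
      · rw [hP00, one_00]; exact hA1
      · rw [hP01, one_01, sub_zero]; exact hP01'
      · rw [hP10, one_10, sub_zero]; exact hP10'
      · rw [hP11, one_11]; exact hP11'
    refine ⟨e₁⁻¹ * e₂⁻¹ * 1 * e₃⁻¹, ?_, ?_⟩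
    · have m1 : e₁ ∈ Subgroup.closure ({E12 m, E21 m} : Set SL2Z) := by
        rw [he₁, ← E12_zpow]
        exact zpow_mem (Subgroup.subset_closure (by simp)) _
      have m2 : e₂ ∈ Subgroup.closure ({E12 m, E21 m} : Set SL2Z) := by
        rw [he₂, ← E21_zpow]
        exact zpow_mem (Subgroup.subset_closure (by simp)) _
      have m3 : e₃ ∈ Subgroup.closure ({E12 m, E21 m} : Set SL2Z) := by
        rw [he₃, ← E12_zpow]
        exact zpow_mem (Subgroup.subset_closure (by simp)) _
      exact mul_mem (mul_mem (mul_mem (inv_mem m1) (inv_mem m2)) (one_mem _)) (inv_mem m3)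
    · have hδeq : δ = e₁⁻¹ * e₂⁻¹ * P * e₃⁻¹ := by rw [hPdef]; group
      have hcong2 := ((((SLCong.refl (p : ℤ) (e₁⁻¹ * e₂⁻¹))).mul hPcong).mul
        (SLCong.refl (p : ℤ) e₃⁻¹))
      rw [show e₁⁻¹ * e₂⁻¹ * P * e₃⁻¹ = δ from hδeq.symm] at hcong2
      rwa [show e₁⁻¹ * e₂⁻¹ * 1 * e₃⁻¹ = e₁⁻¹ * e₂⁻¹ * 1 * e₃⁻¹ from rfl] at hcong2
  by_cases hc : (p : ℤ) ∣ γ 1 0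
  · have hng : ¬(p : ℤ) ∣ (E21 m * γ) 1 0 := by
      have hent : (E21 m * γ) 1 0 = m * γ 0 0 + γ 1 0 := by simp [mul_entry]
      rw [hent]
      intro hdvd
      have h6 : (p : ℤ) ∣ m * γ 0 0 := by
        have h7 := dvd_sub hdvd hc
        simpa using h7
      rcases hp.dvd_mul.mp h6 with h8 | h8
      · exact hpm h8
      · have h9 := dvd_sub (h8.mul_right (γ 1 1)) (hc.mul_left (γ 0 1))
        rw [det_entry γ] at h9
        exact hp.not_dvd_one h9
    obtain ⟨w, hwmem, hwcong⟩ := main (E21 m * γ) hng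
    refine ⟨(E21 m)⁻¹ * w, mul_mem (inv_mem (Subgroup.subset_closure (by simp))) hwmem, ?_⟩
    have hcong3 := (SLCong.refl (p : ℤ) (E21 m)⁻¹).mul hwcong
    rwa [inv_mul_cancel_left] at hcong3
  · exact main γ hc

/-! ### Step lemma b : p does not divide m -/

lemma step_b (n d e m p : ℕ) (pp : p.Prime) (hpm : ¬p ∣ m)
    (h2d : 2 * d ∣ m) (h2e : 2 * e ∣ m) (γ : SL2Z) (hγ : SLCong (m : ℤ) γ 1) :
    ∃ w ∈ GammaStar n d e, SLCong ((m : ℤ) * p) γ w := by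
  have hpm' : ¬(p : ℤ) ∣ (m : ℤ) := fun h => hpm (Int.natCast_dvd_natCast.mp h)
  obtain ⟨w, hwmem, hwcong⟩ := elim_modp (m : ℤ) p pp hpm' γ
  have hw1 : SLCong (m : ℤ) w 1 := by
    refine Subgroup.closure_induction ?_ ?_ ?_ ?_ hwmem
    · rintro x (rfl | rfl)
      · exact SLCong_of_four (by simp) (by simp) (by simp) (by simp)
      · exact SLCong_of_four (by simp) (by simp) (by simp) (by simp)
    · exact SLCong.refl _ _
    · intro x y _ _ hx hy
      have h2 := hx.mul hy
      rwa [mul_one] at h2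
    · intro x _ hx
      exact hx.inv_one
  have hγw : SLCong (m : ℤ) γ w := hγ.trans hw1.symm
  have hcop : IsCoprime ((m : ℤ)) ((p : ℤ)) :=
    ((Nat.prime_iff_prime_int.mp pp).coprime_iff_not_dvd.mpr hpm').symm
  have hle : Subgroup.closure ({E12 (m : ℤ), E21 (m : ℤ)} : Set SL2Z) ≤ GammaStar n d e := by
    rw [Subgroup.closure_le]
    rintro x (rfl | rfl)
    · obtain ⟨m', hm'⟩ := h2d
      have hcast : (m : ℤ) = 2 * (d : ℤ) * (m' : ℤ) := by rw [hm']; push_cast; ring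
      have h3 := E12_memStar n d e (m' : ℤ)
      rwa [← hcast] at h3
    · obtain ⟨m', hm'⟩ := h2e
      have hcast : (m : ℤ) = 2 * (e : ℤ) * (m' : ℤ) := by rw [hm']; push_cast; ring
      have h3 := E21_memStar n d e (m' : ℤ)
      rwa [← hcast] at h3
  exact ⟨w, hle hwmem, fun i j => hcop.mul_dvd (hγw i j) (hwcong i j)⟩

/-! ### Step lemma a : p divides m -/

lemma step_a (n d e m p : ℕ) (hn : 0 < n) (hm : 0 < m)
    (hdn : d ∣ n) (hen : e ∣ n)
    (hGm : Nat.gcd (2 * n) (4 * (d * e)) ∣ m) (hpm : p ∣ m)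
    (hmp2n : m * p ∣ 2 * n) (γ : SL2Z) (hγ : SLCong (m : ℤ) γ 1) :
    ∃ w ∈ GammaStar n d e, SLCong ((m : ℤ) * p) γ w := by
  obtain ⟨x11, hx11⟩ : (m : ℤ) ∣ γ 0 0 - 1 := by simpa using hγ 0 0
  obtain ⟨x12, hx12⟩ : (m : ℤ) ∣ γ 0 1 := by simpa using hγ 0 1
  obtain ⟨x21, hx21⟩ : (m : ℤ) ∣ γ 1 0 := by simpa using hγ 1 0
  obtain ⟨x22, hx22⟩ : (m : ℤ) ∣ γ 1 1 - 1 := by simpa using hγ 1 1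
  have hx00' : γ 0 0 = 1 + (m : ℤ) * x11 := by linarith [hx11]
  have hx01' : γ 0 1 = (m : ℤ) * x12 := hx12
  have hx10' : γ 1 0 = (m : ℤ) * x21 := hx21
  have hx11' : γ 1 1 = 1 + (m : ℤ) * x22 := by linarith [hx22]
  have hdetx : (1 + (m:ℤ) * x11) * (1 + (m:ℤ) * x22) - ((m:ℤ) * x12) * ((m:ℤ) * x21) = 1 := by
    rw [← hx00', ← hx01', ← hx10', ← hx11']
    exact det_entry γ
  have hm0 : (m : ℤ) ≠ 0 := Int.natCast_ne_zero.mpr hm.ne'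
  have hkey : x11 + x22 = -((m:ℤ) * (x11 * x22 - x12 * x21)) := by
    apply mul_left_cancel₀ hm0
    linear_combination hdetx
  have hbez := Nat.gcd_eq_gcd_ab (2 * n) (4 * (d * e))
  obtain ⟨mq, hmq⟩ := hGm
  set X : ℤ := 2 * (d : ℤ) with hX
  set k : ℤ := Nat.gcdB (2 * n) (4 * (d * e)) * x11 * (mq : ℤ) with hk
  set Y : ℤ := 2 * (e : ℤ) * k with hY
  have hmp2n' : ((m : ℤ) * p) ∣ ((2 * n : ℕ) : ℤ) := by
    have h2 := Int.natCast_dvd_natCast.mpr hmp2n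
    push_cast at h2
    exact h2
  have hS : X * Y - (m:ℤ) * x11 =
      ((2 * n : ℕ) : ℤ) * (-(Nat.gcdA (2 * n) (4 * (d * e)) * x11 * (mq : ℤ))) := by
    have hm' : (m : ℤ) = ((Nat.gcd (2 * n) (4 * (d * e)) : ℕ) : ℤ) * (mq : ℤ) := by
      rw [hmq]; push_cast; ring
    rw [hX, hY, hk, hm', hbez]
    push_cast
    ring
  obtain ⟨c, hc⟩ : ((m:ℤ) * p) ∣ (X * Y - (m:ℤ) * x11) := by
    rw [hS]; exact hmp2n'.mul_right _
  have hs' : X * Y = (m:ℤ) * x11 + (m:ℤ) * (p:ℤ) * c := by linear_combination hc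
  obtain ⟨q, hq⟩ := hpm
  have hqm : (m : ℤ) = (p : ℤ) * (q : ℤ) := by rw [hq]; push_cast; ring
  set w : SL2Z := E12 X * E21 Y * E12 (-X) * E21 (-Y) *
      E12 ((m:ℤ) * (x12 + X * x11)) * E21 ((m:ℤ) * (x21 - Y * x11)) with hwdef
  have hwmem : w ∈ GammaStar n d e := by
    have h2dm : 2 * d ∣ m := (Nat.dvd_gcd (mul_dvd_mul_left 2 hdn) ⟨2 * e, by ring⟩).trans ⟨mq, hmq⟩
    have h2em : 2 * e ∣ m := (Nat.dvd_gcd (mul_dvd_mul_left 2 hen) ⟨2 * d, by ring⟩).trans ⟨mq, hmq⟩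
    obtain ⟨m1, hm1⟩ := h2dm
    obtain ⟨m2, hm2⟩ := h2em
    have hm1' : (m : ℤ) = 2 * (d : ℤ) * (m1 : ℤ) := by rw [hm1]; push_cast; ring
    have hm2' : (m : ℤ) = 2 * (e : ℤ) * (m2 : ℤ) := by rw [hm2]; push_cast; ring
    have p1 : E12 X ∈ GammaStar n d e := by
      have h := E12_memStar n d e 1
      rw [show 2 * (d:ℤ) * 1 = 2 * (d:ℤ) from by ring, ← hX] at h
      exact h
    have p2 : E21 Y ∈ GammaStar n d e := by
      have h := E21_memStar n d e k
      rw [← hY] at h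
      exact h
    have p3 : E12 (-X) ∈ GammaStar n d e := by
      have h := E12_memStar n d e (-1)
      rw [show 2 * (d:ℤ) * (-1) = -(2 * (d:ℤ)) from by ring, ← hX] at h
      exact h
    have p4 : E21 (-Y) ∈ GammaStar n d e := by
      have h := E21_memStar n d e (-k)
      rw [show 2 * (e:ℤ) * (-k) = -(2 * (e:ℤ) * k) from by ring, ← hY] at h
      exact h
    have p5 : E12 ((m:ℤ) * (x12 + X * x11)) ∈ GammaStar n d e := by
      have h := E12_memStar n d e ((m1 : ℤ) * (x12 + X * x11))
      rw [show 2 * (d:ℤ) * ((m1:ℤ) * (x12 + X * x11)) = (2 * (d:ℤ) * (m1:ℤ)) * (x12 + X * x11)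
        from by ring, ← hm1'] at h
      exact h
    have p6 : E21 ((m:ℤ) * (x21 - Y * x11)) ∈ GammaStar n d e := by
      have h := E21_memStar n d e ((m2 : ℤ) * (x21 - Y * x11))
      rw [show 2 * (e:ℤ) * ((m2:ℤ) * (x21 - Y * x11)) = (2 * (e:ℤ) * (m2:ℤ)) * (x21 - Y * x11)
        from by ring, ← hm2'] at h
      exact h
    rw [hwdef]
    exact mul_mem (mul_mem (mul_mem (mul_mem (mul_mem p1 p2) p3) p4) p5) p6
  have hw00 : w 0 0 = (1+(X*Y)+(X*Y)*(X*Y)) + ((1+(X*Y)+(X*Y)*(X*Y))*((m:ℤ)*(x12 + X*x11)) - X*(X*Y))*((m:ℤ)*(x21 - Y*x11)) := by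
    rw [hwdef]; simp [mul_entry]; try ring
  have hw01 : w 0 1 = (1+(X*Y)+(X*Y)*(X*Y))*((m:ℤ)*(x12 + X*x11)) - X*(X*Y) := by
    rw [hwdef]; simp [mul_entry]; try ring
  have hw10 : w 1 0 = Y*(X*Y) + (Y*(X*Y)*((m:ℤ)*(x12 + X*x11)) + 1 - (X*Y))*((m:ℤ)*(x21 - Y*x11)) := by
    rw [hwdef]; simp [mul_entry]; try ring
  have hw11 : w 1 1 = Y*(X*Y)*((m:ℤ)*(x12 + X*x11)) + 1 - (X*Y) := by
    rw [hwdef]; simp [mul_entry]; try ring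
  refine ⟨w, hwmem, SLCong_of_four ?_ ?_ ?_ ?_⟩
  · rw [hw00, hx00']
    exact ⟨(-c - (q:ℤ)*x11*x11 - 2*(m:ℤ)*c*x11 - (m:ℤ)*(p:ℤ)*c*c - (q:ℤ)*(x21 - Y*x11)*x12 + (m:ℤ)*(x21 - Y*x11)*(X*c - ((q:ℤ)*x11 + (m:ℤ)*c)*(x12 + X*x11)*(1+(X*Y)))), by linear_combination (-1 - ((X*Y) + (m:ℤ)*x11 + (m:ℤ)*(p:ℤ)*c) + (m:ℤ)*(x21 - Y*x11)*(X - (m:ℤ)*(x12 + X*x11)*(1+(X*Y))))*hs' + (-((m:ℤ)*x11*x11) - (m:ℤ)*(x21 - Y*x11)*x12 + (m:ℤ)*(x21 - Y*x11)*(-((m:ℤ)*x11*(x12 + X*x11)*(1+(X*Y)))))*hqm⟩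
  · rw [hw01, hx01']
    exact ⟨(X*c - ((q:ℤ)*x11 + (m:ℤ)*c)*(x12 + X*x11)*(1+(X*Y))), by linear_combination (X - (m:ℤ)*(x12 + X*x11)*(1+(X*Y)))*hs' + (-((m:ℤ)*x11*(x12 + X*x11)*(1+(X*Y))))*hqm⟩
  · rw [hw10, hx10']
    exact ⟨(-(Y*c) + (q:ℤ)*x11*(x21 - Y*x11) + (m:ℤ)*c*(x21 - Y*x11) - (q:ℤ)*Y*(X*Y)*(x12 + X*x11)*(x21 - Y*x11)), by linear_combination (-Y + (m:ℤ)*(x21 - Y*x11))*hs' + ((m:ℤ)*x11*(x21 - Y*x11) - (m:ℤ)*Y*(X*Y)*(x12 + X*x11)*(x21 - Y*x11))*hqm⟩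
  · rw [hw11, hx11']
    exact ⟨(c - (q:ℤ)*(x11*x22 - x12*x21) - (q:ℤ)*Y*x11*(x12 + X*x11) - (m:ℤ)*Y*c*(x12 + X*x11)), by linear_combination (1 - (m:ℤ)*Y*(x12 + X*x11))*hs' + (-((m:ℤ)*(x11*x22 - x12*x21)) - (m:ℤ)*Y*x11*(x12 + X*x11))*hqm + (m:ℤ)*hkey⟩

/-! ### The core induction -/

lemma core (n d e : ℕ) (hn : 0 < n) (hdn : d ∣ n) (hen : e ∣ n) :
    ∀ c m : ℕ, 2 * n = m * c → Nat.gcd (2 * n) (4 * (d * e)) ∣ m →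
      ∀ γ : SL2Z, SLCong (m : ℤ) γ 1 → γ ∈ GammaStar n d e := by
  intro c
  induction c using Nat.strong_induction_on with
  | _ c ih =>
    intro m hmc hGm γ hγ
    rcases eq_or_ne c 1 with rfl | h1
    · have hm2n : m = 2 * n := by omega
      subst hm2n
      exact Gamma_le_Star n d e ((Gamma_iff (2 * n) γ).mpr hγ)
    · obtain ⟨p, pp, hpc⟩ := Nat.exists_prime_and_dvd h1
      obtain ⟨c', rfl⟩ := hpc
      have hm0 : 0 < m := by
        rcases Nat.eq_zero_or_pos m with h | h
        · subst h; simp at hmc; omega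
        · exact h
      have hmc' : 2 * n = (m * p) * c' := by rw [hmc]; ring
      have hmp2n : m * p ∣ 2 * n := ⟨c', hmc'⟩
      have hc'0 : c' ≠ 0 := by
        rintro rfl
        simp at hmc'
        omega
      have hlt : c' < p * c' := by
        have h2 := pp.two_le
        have h3 : 0 < c' := Nat.pos_of_ne_zero hc'0
        nlinarith
      obtain ⟨w, hwmem, hwcong⟩ : ∃ w ∈ GammaStar n d e, SLCong ((m:ℤ) * p) γ w := by
        by_cases hpm : p ∣ m
        · exact step_a n d e m p hn hm0 hdn hen hGm hpm hmp2n γ hγ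
        · have h2d : 2 * d ∣ m := (Nat.dvd_gcd (mul_dvd_mul_left 2 hdn) ⟨2 * e, by ring⟩).trans hGm
          have h2e : 2 * e ∣ m := (Nat.dvd_gcd (mul_dvd_mul_left 2 hen) ⟨2 * d, by ring⟩).trans hGm
          exact step_b n d e m p pp hpm h2d h2e γ hγ
      have hγw : SLCong (((m * p : ℕ)) : ℤ) (γ * w⁻¹) 1 := by
        have h2 := hwcong.mul (SLCong.refl ((m:ℤ) * p) w⁻¹)
        have h3 : w * w⁻¹ = (1 : SL2Z) := by group
        rw [h3] at h2
        have h4 : ((m * p : ℕ) : ℤ) = (m:ℤ) * p := by push_cast; ring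
        rw [h4]
        exact h2
      have hmem2 : γ * w⁻¹ ∈ GammaStar n d e :=
        ih c' hlt (m * p) hmc' (hGm.trans (dvd_mul_right m p)) (γ * w⁻¹) hγw
      have h5 : γ = γ * w⁻¹ * w := by group
      rw [h5]
      exact mul_mem hmem2 hwmem

end LarcherAux


open LarcherAux in
/-- Larcher's theorem restated for subgroups of `Γ̄(2)`: if `Γ ≤ Γ̄(2)` is a finite-index
congruence subgroup of level `2n`, `d` is the degree of the face at `∞` (least `d > 0` with
`Ā^d ∈ Γ`) and `e` is the degree of the black vertex at `0` (least `e > 0` with `B̄^e ∈ Γ`),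
then `n ∣ 2·d·e`. -/
theorem larcher_restated (Γ : Subgroup PSL2Z) (hsub : Γ ≤ GammaBar 2)
    (hfin : Γ.relIndex (GammaBar 2) ≠ 0) (n d e : ℕ)
    (hlevel : IsLeast {N : ℕ | 0 < N ∧ GammaBar N ≤ Γ} (2 * n))
    (hd : IsLeast {k : ℕ | 0 < k ∧ Abar ^ k ∈ Γ} d)
    (he : IsLeast {k : ℕ | 0 < k ∧ Bbar ^ k ∈ Γ} e) :
    n ∣ 2 * d * e := by
  obtain ⟨⟨h2npos, hΓ2n⟩, hmin⟩ := hlevel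
  have hn : 0 < n := by omega
  have hmemA : matA ^ n ∈ CongruenceSubgroup.Gamma (2 * n) := by
    rw [Gamma_iff, matA_eq, E12_pow]
    refine SLCong_of_four (by simp) ?_ (by simp) (by simp)
    simp only [E12_01, one_01, sub_zero]
    exact ⟨1, by push_cast; ring⟩
  have hmemB : matB ^ n ∈ CongruenceSubgroup.Gamma (2 * n) := by
    rw [Gamma_iff, matB_eq, E21_pow]
    refine SLCong_of_four (by simp) (by simp) ?_ (by simp)
    simp only [E21_10, one_10, sub_zero]
    exact ⟨1, by push_cast; ring⟩
  have hAbar : ∀ k : ℕ, projSL (matA ^ k) = Abar ^ k := fun k => map_pow projSL matA k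
  have hBbar : ∀ k : ℕ, projSL (matB ^ k) = Bbar ^ k := fun k => map_pow projSL matB k
  have hAn : Abar ^ n ∈ Γ := by
    rw [← hAbar]
    exact hΓ2n (Subgroup.mem_map_of_mem projSL hmemA)
  have hBn : Bbar ^ n ∈ Γ := by
    rw [← hBbar]
    exact hΓ2n (Subgroup.mem_map_of_mem projSL hmemB)
  have hd_dvd : d ∣ n := by
    have hr : Abar ^ (n % d) ∈ Γ := by
      have heq : Abar ^ n = (Abar ^ d) ^ (n / d) * Abar ^ (n % d) := by
        rw [← pow_mul, ← pow_add, Nat.div_add_mod]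
      have h6 := mul_mem (inv_mem (pow_mem hd.1.2 (n / d))) hAn
      rw [heq, inv_mul_cancel_left] at h6
      exact h6
    by_contra hnd
    have hpos : 0 < n % d := Nat.pos_of_ne_zero fun h => hnd (Nat.dvd_of_mod_eq_zero h)
    have h7 := hd.2 ⟨hpos, hr⟩
    have h8 := Nat.mod_lt n hd.1.1
    omega
  have he_dvd : e ∣ n := by
    have hr : Bbar ^ (n % e) ∈ Γ := by
      have heq : Bbar ^ n = (Bbar ^ e) ^ (n / e) * Bbar ^ (n % e) := by
        rw [← pow_mul, ← pow_add, Nat.div_add_mod]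
      have h6 := mul_mem (inv_mem (pow_mem he.1.2 (n / e))) hBn
      rw [heq, inv_mul_cancel_left] at h6
      exact h6
    by_contra hnd
    have hpos : 0 < n % e := Nat.pos_of_ne_zero fun h => hnd (Nat.dvd_of_mod_eq_zero h)
    have h7 := he.2 ⟨hpos, hr⟩
    have h8 := Nat.mod_lt n he.1.1
    omega
  have hstar : GammaStar n d e ≤ Γ.comap projSL := by
    rw [GammaStar, Subgroup.closure_le]
    rintro x (hx | hx)
    · rcases hx with rfl | rfl
      · show projSL (matA ^ d) ∈ Γ
        rw [hAbar]; exact hd.1.2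
      · show projSL (matB ^ e) ∈ Γ
        rw [hBbar]; exact he.1.2
    · show projSL x ∈ Γ
      exact hΓ2n (Subgroup.mem_map_of_mem projSL hx)
  have hGpos : 0 < Nat.gcd (2 * n) (4 * (d * e)) := Nat.gcd_pos_of_pos_left _ (by omega)
  have hG2n : Nat.gcd (2 * n) (4 * (d * e)) ∣ 2 * n := Nat.gcd_dvd_left _ _
  have hGBar : GammaBar (Nat.gcd (2 * n) (4 * (d * e))) ≤ Γ := by
    intro x hx
    obtain ⟨γ, hγ, rfl⟩ := Subgroup.mem_map.mp hx
    obtain ⟨cc, hcc⟩ := hG2n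
    have hγstar := core n d e hn hd_dvd he_dvd cc _ hcc dvd_rfl γ ((Gamma_iff _ _).mp hγ)
    exact hstar hγstar
  have h2nG := hmin ⟨hGpos, hGBar⟩
  have hGle : Nat.gcd (2 * n) (4 * (d * e)) ≤ 2 * n := Nat.le_of_dvd (by omega) hG2n
  have hGeq : Nat.gcd (2 * n) (4 * (d * e)) = 2 * n := le_antisymm hGle h2nG
  have h2n4de : 2 * n ∣ 4 * (d * e) := hGeq ▸ Nat.gcd_dvd_right (2 * n) (4 * (d * e))
  obtain ⟨t, ht⟩ := h2n4de
  refine ⟨t, ?_⟩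
  have ha : 2 * (2 * (d * e)) = 4 * (d * e) := by ring
  have hb : 2 * n * t = 2 * (n * t) := by ring
  have h9 : 2 * (2 * (d * e)) = 2 * (n * t) := by rw [ha, ht, hb]
  have h10 : 2 * (d * e) = n * t := Nat.eq_of_mul_eq_mul_left (by omega) h9
  calc 2 * d * e = 2 * (d * e) := by ring
  _ = n * t := h10
end

section
/- Let Γ be a finite-index congruence subgroup of PSL₂(ℤ) of level m, i.e., m is the smallest positive integer with Γ̄(m) ≤ Γ. Then Γ has a cusp of width m: there exists g ∈ PSL₂(ℤ) such that the least positive integer k with g·T^k·g⁻¹ ∈ Γ is equal to m, where T is the image of [[1,1],[0,1]]. -/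
open Matrix CongruenceSubgroup

def nilpo (q r s : ℤ) (h : q * q + r * s = 0) (j : ℤ) : SL2Z :=
  ⟨!![1 + j * q, j * r; j * s, 1 - j * q], by
    simp [Matrix.det_fin_two_of]; linear_combination (-(j * j)) * h⟩

@[simp] lemma nilpo_coe (q r s h j) :
    (nilpo q r s h j : Matrix (Fin 2) (Fin 2) ℤ) = !![1 + j * q, j * r; j * s, 1 - j * q] := rfl

lemma nilpo_zero (q r s h) : nilpo q r s h 0 = 1 := by
  ext i j; fin_cases i <;> fin_cases j <;> simp [nilpo]

lemma nilpo_add (q r s h a b) : nilpo q r s h (a + b) = nilpo q r s h a * nilpo q r s h b := by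
  ext i j
  rw [Matrix.SpecialLinearGroup.coe_mul]
  fin_cases i <;> fin_cases j <;>
      simp [nilpo, Matrix.mul_apply, Fin.sum_univ_two] <;>
    first
      | linear_combination (-(a * b)) * h
      | linear_combination (a * b) * h
      | ring1

lemma nilpo_neg (q r s h a) : nilpo q r s h (-a) = (nilpo q r s h a)⁻¹ := by
  rw [eq_inv_iff_mul_eq_one, ← nilpo_add, neg_add_cancel, nilpo_zero]

lemma nilpo_zpow (q r s h a) (k : ℤ) : nilpo q r s h a ^ k = nilpo q r s h (a * k) := by
  induction k using Int.induction_on with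
  | zero => simpa using (nilpo_zero q r s h).symm
  | succ n ih => rw [_root_.zpow_add_one, ih, ← nilpo_add]; ring_nf
  | pred n ih => rw [_root_.zpow_sub_one, ih, ← nilpo_neg, ← nilpo_add]; ring_nf

/-- `Tz j = [[1,j],[0,1]]`. -/
def Tz (j : ℤ) : SL2Z := nilpo 0 1 0 (by ring) j
/-- `Lz j = [[1,0],[j,1]]`. -/
def Lz (j : ℤ) : SL2Z := nilpo 0 0 1 (by ring) j

lemma matT_eq : matT = Tz 1 := by
  ext i j; fin_cases i <;> fin_cases j <;> simp [matT, Tz, nilpo]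

lemma matL_eq : matL = Lz 1 := by
  ext i j; fin_cases i <;> fin_cases j <;> simp [matL, Lz, nilpo]

lemma matT_pow (k : ℕ) : matT ^ k = Tz k := by
  rw [matT_eq, ← zpow_natCast, Tz, nilpo_zpow]; norm_num [Tz]

lemma matT_zpow (k : ℤ) : matT ^ k = Tz k := by
  rw [matT_eq, Tz, nilpo_zpow]; norm_num [Tz]

lemma matL_zpow (k : ℤ) : matL ^ k = Lz k := by
  rw [matL_eq, Lz, nilpo_zpow]; norm_num [Lz]

lemma conj_nil_ok (a c : ℤ) : (-(a * c)) * (-(a * c)) + (a * a) * (-(c * c)) = 0 := by ring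

/-- conjugation of `T^j` only depends on the first column of `g`. -/
lemma conj_Tz (g : SL2Z) (j : ℤ) :
    g * Tz j * g⁻¹ =
      nilpo (-(g.1 0 0 * g.1 1 0)) (g.1 0 0 * g.1 0 0) (-(g.1 1 0 * g.1 1 0))
        (conj_nil_ok _ _) j := by
  obtain ⟨gm, hg⟩ := g
  have hdet : gm 0 0 * gm 1 1 - gm 0 1 * gm 1 0 = 1 := by
    rwa [Matrix.det_fin_two] at hg
  rw [Matrix.SpecialLinearGroup.SL2_inv_expl (⟨gm, hg⟩ : SL2Z)]
  ext i k
  erw [Matrix.SpecialLinearGroup.coe_mul, Matrix.SpecialLinearGroup.coe_mul]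
  rw [Matrix.mul_apply]
  fin_cases i <;> fin_cases k <;>
      simp [Tz, nilpo, Matrix.mul_apply, Fin.sum_univ_two] <;>
    first
      | ring1
      | linear_combination hdet
      | linear_combination (-1) * hdet
      | linear_combination (j * gm 0 0) * hdet
      | linear_combination (-(j * gm 0 0)) * hdet
      | linear_combination (1 + j * gm 0 0) * hdet
      | linear_combination (1 - j * gm 0 0) * hdet
      | linear_combination (-1 + j * gm 0 0) * hdet
      | linear_combination (-1 - j * gm 0 0) * hdet

lemma dvd_of_zmod_eq {N : ℕ} {x y : ℤ} (h : (x : ZMod N) = y) : (N : ℤ) ∣ x - y := by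
  have : ((x - y : ℤ) : ZMod N) = 0 := by push_cast; rw [h]; ring
  exact (ZMod.intCast_zmod_eq_zero_iff_dvd _ _).1 this

lemma zmod_eq_of_dvd {N : ℕ} {x y : ℤ} (h : (N : ℤ) ∣ x - y) : (x : ZMod N) = y := by
  have : ((x - y : ℤ) : ZMod N) = 0 := (ZMod.intCast_zmod_eq_zero_iff_dvd _ _).2 h
  push_cast at this
  linear_combination this

lemma mem_Gamma_iff {N : ℕ} {γ : SL2Z} :
    γ ∈ CongruenceSubgroup.Gamma N ↔
      (N:ℤ) ∣ γ.1 0 0 - 1 ∧ (N:ℤ) ∣ γ.1 0 1 ∧ (N:ℤ) ∣ γ.1 1 0 ∧ (N:ℤ) ∣ γ.1 1 1 - 1 := by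
  rw [CongruenceSubgroup.Gamma_mem]
  constructor
  · rintro ⟨h1, h2, h3, h4⟩
    exact ⟨dvd_of_zmod_eq (by exact_mod_cast h1), by simpa using dvd_of_zmod_eq (y := 0) (by exact_mod_cast h2),
      by simpa using dvd_of_zmod_eq (y := 0) (by exact_mod_cast h3), dvd_of_zmod_eq (by exact_mod_cast h4)⟩
  · rintro ⟨h1, h2, h3, h4⟩
    refine ⟨by exact_mod_cast zmod_eq_of_dvd h1, by rw [show ((0:ZMod N)) = ((0:ℤ):ZMod N) by norm_cast]; exact zmod_eq_of_dvd (y := 0) (by simpa using h2),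
      by rw [show ((0:ZMod N)) = ((0:ℤ):ZMod N) by norm_cast]; exact zmod_eq_of_dvd (y := 0) (by simpa using h3), by exact_mod_cast zmod_eq_of_dvd h4⟩

lemma mem_Gamma_mul {a b : ℕ} (h : Nat.Coprime a b) {γ : SL2Z}
    (ha : γ ∈ CongruenceSubgroup.Gamma a) (hb : γ ∈ CongruenceSubgroup.Gamma b) :
    γ ∈ CongruenceSubgroup.Gamma (a * b) := by
  rw [mem_Gamma_iff] at ha hb ⊢
  have hco : IsCoprime (a : ℤ) (b : ℤ) := Int.isCoprime_iff_gcd_eq_one.2 (by simpa using h)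
  push_cast
  exact ⟨hco.mul_dvd ha.1 hb.1, hco.mul_dvd ha.2.1 hb.2.1,
    hco.mul_dvd ha.2.2.1 hb.2.2.1, hco.mul_dvd ha.2.2.2 hb.2.2.2⟩

lemma proj_mem_congr {Γ : Subgroup PSL2Z} {N : ℕ} (hN : GammaBar N ≤ Γ) {x y : SL2Z}
    (h : x * y⁻¹ ∈ CongruenceSubgroup.Gamma N) : projSL x ∈ Γ ↔ projSL y ∈ Γ := by
  have hx : projSL (x * y⁻¹) ∈ Γ := hN ⟨x * y⁻¹, h, rfl⟩
  constructor
  · intro hy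
    have : projSL y = (projSL (x * y⁻¹))⁻¹ * projSL x := by
      rw [← _root_.map_inv, ← _root_.map_mul]; group
    rw [this]; exact mul_mem (inv_mem hx) hy
  · intro hy
    have : projSL x = projSL (x * y⁻¹) * projSL y := by rw [← _root_.map_mul]; group
    rw [this]; exact mul_mem hx hy

def matS : SL2Z := ⟨!![0, -1; 1, 0], by norm_num [Matrix.det_fin_two_of]⟩

/-- All conjugates of `T^n`. -/
def conjSet (n : ℕ) : Set SL2Z := {x | ∃ g : SL2Z, x = g * matT ^ n * g⁻¹}

/-- The subgroup generated by `Γ(n p)` and all conjugates of `T^n`. -/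
def genGrp (n p : ℕ) : Subgroup SL2Z :=
  Subgroup.closure ((CongruenceSubgroup.Gamma (n * p) : Set SL2Z) ∪ conjSet n)

lemma nilpo_congr (q r s h q' r' s' h') (j j' : ℤ) (e1 : j * q = j' * q') (e2 : j * r = j' * r')
    (e3 : j * s = j' * s') : nilpo q r s h j = nilpo q' r' s' h' j' := by
  ext i k; fin_cases i <;> fin_cases k <;> simp [nilpo, e1, e2, e3]

lemma Tz_mem_genGrp (n p : ℕ) (k : ℤ) : Tz (n * k) ∈ genGrp n p := by
  have h1 : matT ^ n ∈ genGrp n p :=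
    Subgroup.subset_closure (Or.inr ⟨1, by group⟩)
  have := Subgroup.zpow_mem _ h1 k
  rwa [matT_pow, Tz, nilpo_zpow] at this

lemma Lz_mem_genGrp (n p : ℕ) (k : ℤ) : Lz (n * k) ∈ genGrp n p := by
  have h1 : matS * matT ^ n * matS⁻¹ ∈ genGrp n p :=
    Subgroup.subset_closure (Or.inr ⟨matS, rfl⟩)
  rw [matT_pow, conj_Tz] at h1
  have := Subgroup.zpow_mem _ h1 (-k)
  rw [nilpo_zpow] at this
  have he : nilpo (-(matS.1 0 0 * matS.1 1 0)) (matS.1 0 0 * matS.1 0 0)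
      (-(matS.1 1 0 * matS.1 1 0)) (conj_nil_ok _ _) ((n : ℤ) * (-k)) = Lz (n * k) := by
    apply nilpo_congr <;> simp [matS] <;> ring
  rwa [he] at this

lemma P1_mem_genGrp (n p : ℕ) (k : ℤ) :
    nilpo (-1) 1 (-1) (by ring) ((n : ℤ) * k) ∈ genGrp n p := by
  have h1 : matL * matT ^ n * matL⁻¹ ∈ genGrp n p :=
    Subgroup.subset_closure (Or.inr ⟨matL, rfl⟩)
  rw [matT_pow, conj_Tz] at h1
  have := Subgroup.zpow_mem _ h1 k
  rw [nilpo_zpow] at this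
  have he : nilpo (-(matL.1 0 0 * matL.1 1 0)) (matL.1 0 0 * matL.1 0 0)
      (-(matL.1 1 0 * matL.1 1 0)) (conj_nil_ok _ _) ((n : ℤ) * k) =
      nilpo (-1) 1 (-1) (by ring) ((n : ℤ) * k) := by
    apply nilpo_congr <;> simp [matL] <;> ring
  rwa [he] at this

lemma Gamma_le_genGrp (n p : ℕ) : CongruenceSubgroup.Gamma (n * p) ≤ genGrp n p :=
  fun _ hx => Subgroup.subset_closure (Or.inl hx)

lemma gamma_le_gen_of_dvd (n p : ℕ) (hpn : (p : ℤ) ∣ (n : ℤ)) :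
    CongruenceSubgroup.Gamma n ≤ genGrp n p := by
  intro γ hγ
  obtain ⟨d1, d2, d3, d4⟩ := mem_Gamma_iff.1 hγ
  obtain ⟨x, hx⟩ := d1
  obtain ⟨y, hy⟩ := d2
  obtain ⟨z, hz⟩ := d3
  obtain ⟨w, hw⟩ := d4
  obtain ⟨u, hu⟩ := hpn
  have hγ00 : γ.1 0 0 = 1 + (n : ℤ) * x := by linarith
  have hγ01 : γ.1 0 1 = (n : ℤ) * y := by linarith
  have hγ10 : γ.1 1 0 = (n : ℤ) * z := by linarith
  have hγ11 : γ.1 1 1 = 1 + (n : ℤ) * w := by linarith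
  have hdet : γ.1 0 0 * γ.1 1 1 - γ.1 0 1 * γ.1 1 0 = 1 := by
    have := γ.2; rwa [Matrix.det_fin_two] at this
  have h0 : (n : ℤ) * (x + w) + (n : ℤ) * (n : ℤ) * (x * w - y * z) = 0 := by
    rw [hγ00, hγ01, hγ10, hγ11] at hdet
    linear_combination hdet
  have hone : ((-1 : ℤ)) * (-1) + 1 * (-1) = 0 := by ring
  set A1 : SL2Z := nilpo (-1) 1 (-1) hone ((n : ℤ) * (-x)) with hA1
  set A2 : SL2Z := Tz ((n : ℤ) * (y + x)) with hA2
  set A3 : SL2Z := Lz ((n : ℤ) * (z - x)) with hA3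
  set V : SL2Z := γ * A3⁻¹ * A2⁻¹ * A1⁻¹ with hV
  have hVmem : V ∈ CongruenceSubgroup.Gamma (n * p) := by
    have e3 : A3⁻¹ = Lz (-((n : ℤ) * (z - x))) := (nilpo_neg _ _ _ _ _).symm
    have e2 : A2⁻¹ = Tz (-((n : ℤ) * (y + x))) := (nilpo_neg _ _ _ _ _).symm
    have e1 : A1⁻¹ = nilpo (-1) 1 (-1) hone (-((n : ℤ) * (-x))) := (nilpo_neg _ _ _ _ _).symm
    rw [mem_Gamma_iff]
    rw [hV, e1, e2, e3]
    refine ⟨⟨u * (-(y*z) + x*y + (n:ℤ)*(x*y*z) + (n:ℤ)*x^3 - (n:ℤ)^2*x*y^2*z - (n:ℤ)^2*x^2*y*z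
        + (n:ℤ)^2*x^2*y^2 + (n:ℤ)^2*x^3*y), ?_⟩,
      ⟨u * (-(x*y) - x^2 + (n:ℤ)*y^2*z - (n:ℤ)*x*y^2 - (n:ℤ)*x^2*y - (n:ℤ)*x^3 + (n:ℤ)^2*x*y^2*z
        + (n:ℤ)^2*x^2*y*z - (n:ℤ)^2*x^2*y^2 - (n:ℤ)^2*x^3*y), ?_⟩,
      ⟨u * (-(z*w) - x^2 + (n:ℤ)*x*z*w - (n:ℤ)*x^2*w + (n:ℤ)*x^2*y + (n:ℤ)*x^3 - (n:ℤ)^2*x*y*z*w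
        - (n:ℤ)^2*x^2*z*w + (n:ℤ)^2*x^2*y*w + (n:ℤ)^2*x^3*w), ?_⟩,
      ⟨u * (y*z - x*y + (n:ℤ)*y*z*w - (n:ℤ)*x*y*w - (n:ℤ)*x^2*y - (n:ℤ)*x^3 + (n:ℤ)^2*x*y*z*w
        + (n:ℤ)^2*x^2*z*w - (n:ℤ)^2*x^2*y*w - (n:ℤ)^2*x^3*w), ?_⟩⟩ <;>
      simp only [Matrix.SpecialLinearGroup.coe_mul, Matrix.mul_apply, Fin.sum_univ_two,
        nilpo_coe, Tz, Lz, Matrix.cons_val_zero, Matrix.cons_val_one, Matrix.head_cons,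
        Matrix.head_fin_const, Matrix.of_apply, Matrix.cons_val', Matrix.empty_val',
        Matrix.cons_val_fin_one, hγ00, hγ01, hγ10, hγ11] <;>
      push_cast <;>
    first
      | linear_combination ((-(y*z) + x*y + (n:ℤ)*(x*y*z) + (n:ℤ)*x^3 - (n:ℤ)^2*x*y^2*z
          - (n:ℤ)^2*x^2*y*z + (n:ℤ)^2*x^2*y^2 + (n:ℤ)^2*x^3*y) * (n:ℤ)) * hu
      | linear_combination ((-(x*y) - x^2 + (n:ℤ)*y^2*z - (n:ℤ)*x*y^2 - (n:ℤ)*x^2*y - (n:ℤ)*x^3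
          + (n:ℤ)^2*x*y^2*z + (n:ℤ)^2*x^2*y*z - (n:ℤ)^2*x^2*y^2 - (n:ℤ)^2*x^3*y) * (n:ℤ)) * hu
      | linear_combination ((-(z*w) - x^2 + (n:ℤ)*x*z*w - (n:ℤ)*x^2*w + (n:ℤ)*x^2*y + (n:ℤ)*x^3
          - (n:ℤ)^2*x*y*z*w - (n:ℤ)^2*x^2*z*w + (n:ℤ)^2*x^2*y*w + (n:ℤ)^2*x^3*w) * (n:ℤ)) * hu
      | linear_combination ((y*z - x*y + (n:ℤ)*y*z*w - (n:ℤ)*x*y*w - (n:ℤ)*x^2*y - (n:ℤ)*x^3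
          + (n:ℤ)^2*x*y*z*w + (n:ℤ)^2*x^2*z*w - (n:ℤ)^2*x^2*y*w - (n:ℤ)^2*x^3*w) * (n:ℤ)) * hu
          + h0
  have hgam : γ = V * A1 * A2 * A3 := by rw [hV]; group
  rw [hgam]
  refine mul_mem (mul_mem (mul_mem (Gamma_le_genGrp n p hVmem) ?_) ?_) ?_
  · exact P1_mem_genGrp n p (-x)
  · exact Tz_mem_genGrp n p (y + x)
  · exact Lz_mem_genGrp n p (z - x)

section
variable {R : Type*} [CommRing R]

def TzM (r : R) : Matrix.SpecialLinearGroup (Fin 2) R :=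
  ⟨!![1, r; 0, 1], by simp [Matrix.det_fin_two_of]⟩
def LzM (r : R) : Matrix.SpecialLinearGroup (Fin 2) R :=
  ⟨!![1, 0; r, 1], by simp [Matrix.det_fin_two_of]⟩

lemma TzM_mul (a b : R) : TzM a * TzM b = TzM (a + b) := by
  ext i j; rw [Matrix.SpecialLinearGroup.coe_mul]; fin_cases i <;> fin_cases j <;>
    simp [TzM, Matrix.mul_apply, Fin.sum_univ_two] <;> ring
lemma LzM_mul (a b : R) : LzM a * LzM b = LzM (a + b) := by
  ext i j; rw [Matrix.SpecialLinearGroup.coe_mul]; fin_cases i <;> fin_cases j <;>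
    simp [LzM, Matrix.mul_apply, Fin.sum_univ_two] <;> ring
end

/-- Any `SL(2, F)` element with nonzero lower-left entry is `T^x L^c T^z`. -/
lemma SL2_decomp {F : Type*} [Field F] (M : Matrix.SpecialLinearGroup (Fin 2) F)
    (hc : M.1 1 0 ≠ 0) :
    M = TzM ((M.1 0 0 - 1) / M.1 1 0) * LzM (M.1 1 0) * TzM ((M.1 1 1 - 1) / M.1 1 0) := by
  have hdet : M.1 0 0 * M.1 1 1 - M.1 0 1 * M.1 1 0 = 1 := by
    have := M.2; rwa [Matrix.det_fin_two] at this
  ext i j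
  rw [Matrix.SpecialLinearGroup.coe_mul, Matrix.SpecialLinearGroup.coe_mul]
  fin_cases i <;> fin_cases j <;>
      simp [TzM, LzM, Matrix.mul_apply, Fin.sum_univ_two] <;>
    field_simp <;>
    first
      | ring1
      | linear_combination hdet
      | linear_combination (-1 : F) * hdet
      | linear_combination M.1 1 0 * hdet
      | linear_combination (-(M.1 1 0)) * hdet

/-- Reduction mod `N`. -/
def redN (N : ℕ) : SL2Z →* Matrix.SpecialLinearGroup (Fin 2) (ZMod N) :=
  Matrix.SpecialLinearGroup.map (Int.castRingHom (ZMod N))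

lemma redN_apply (N : ℕ) (g : SL2Z) (i j : Fin 2) :
    (redN N g).1 i j = ((g.1 i j : ℤ) : ZMod N) := rfl

lemma mem_Gamma_iff_redN {N : ℕ} {γ : SL2Z} :
    γ ∈ CongruenceSubgroup.Gamma N ↔ redN N γ = 1 := Iff.rfl

lemma exists_word_T (p n : ℕ) [hp : Fact p.Prime] (hpn : ¬ p ∣ n) (r : ZMod p) :
    ∃ w ∈ Subgroup.closure ({matT ^ n, matL ^ n} : Set SL2Z), redN p w = TzM r := by
  have hn0 : (n : ZMod p) ≠ 0 := by
    simpa [ZMod.natCast_eq_zero_iff] using hpn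
  set k : ℤ := ((((n : ZMod p))⁻¹ * r).val : ℤ) with hk
  refine ⟨(matT ^ n) ^ k, Subgroup.zpow_mem _ (Subgroup.subset_closure (by simp)) k, ?_⟩
  rw [matT_pow]
  rw [show Tz (n : ℤ) = nilpo 0 1 0 (by ring) (n : ℤ) from rfl, nilpo_zpow]
  ext i j
  fin_cases i <;> fin_cases j <;>
    simp only [redN_apply, nilpo_coe, TzM, Matrix.cons_val_zero, Matrix.cons_val_one,
      Matrix.head_cons, Matrix.of_apply, Matrix.cons_val', Matrix.empty_val',
      Matrix.cons_val_fin_one, Matrix.head_fin_const] <;> push_cast <;> try norm_num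
  rw [hk]
  push_cast
  rw [ZMod.natCast_val, ZMod.cast_id]
  field_simp

lemma exists_word_L (p n : ℕ) [hp : Fact p.Prime] (hpn : ¬ p ∣ n) (r : ZMod p) :
    ∃ w ∈ Subgroup.closure ({matT ^ n, matL ^ n} : Set SL2Z), redN p w = LzM r := by
  have hn0 : (n : ZMod p) ≠ 0 := by
    simpa [ZMod.natCast_eq_zero_iff] using hpn
  set k : ℤ := ((((n : ZMod p))⁻¹ * r).val : ℤ) with hk
  refine ⟨(matL ^ n) ^ k, Subgroup.zpow_mem _ (Subgroup.subset_closure (by simp)) k, ?_⟩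
  rw [show (matL : SL2Z) ^ (n : ℕ) = matL ^ ((n : ℕ) : ℤ) from (zpow_natCast _ _).symm, matL_zpow]
  rw [show Lz (n : ℤ) = nilpo 0 0 1 (by ring) (n : ℤ) from rfl, nilpo_zpow]
  ext i j
  fin_cases i <;> fin_cases j <;>
    simp only [redN_apply, nilpo_coe, LzM, Matrix.cons_val_zero, Matrix.cons_val_one,
      Matrix.head_cons, Matrix.of_apply, Matrix.cons_val', Matrix.empty_val',
      Matrix.cons_val_fin_one, Matrix.head_fin_const] <;> push_cast <;> try norm_num
  rw [hk]
  push_cast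
  rw [ZMod.natCast_val, ZMod.cast_id]
  field_simp

lemma LzM_zero {R : Type*} [CommRing R] : (LzM (0 : R)) = 1 := by
  ext i j; fin_cases i <;> fin_cases j <;> simp [LzM]

lemma exists_word (p n : ℕ) [hp : Fact p.Prime] (hpn : ¬ p ∣ n)
    (M : Matrix.SpecialLinearGroup (Fin 2) (ZMod p)) :
    ∃ w ∈ Subgroup.closure ({matT ^ n, matL ^ n} : Set SL2Z), redN p w = M := by
  have key : ∀ M' : Matrix.SpecialLinearGroup (Fin 2) (ZMod p), M'.1 1 0 ≠ 0 →
      ∃ w ∈ Subgroup.closure ({matT ^ n, matL ^ n} : Set SL2Z), redN p w = M' := by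
    intro M' hc
    obtain ⟨w1, hw1, e1⟩ := exists_word_T p n hpn ((M'.1 0 0 - 1) / M'.1 1 0)
    obtain ⟨w2, hw2, e2⟩ := exists_word_L p n hpn (M'.1 1 0)
    obtain ⟨w3, hw3, e3⟩ := exists_word_T p n hpn ((M'.1 1 1 - 1) / M'.1 1 0)
    refine ⟨w1 * w2 * w3, mul_mem (mul_mem hw1 hw2) hw3, ?_⟩
    rw [_root_.map_mul, _root_.map_mul, e1, e2, e3, ← SL2_decomp M' hc]
  by_cases hc : M.1 1 0 ≠ 0
  · exact key M hc
  · push_neg at hc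
    have hdet : M.1 0 0 * M.1 1 1 - M.1 0 1 * M.1 1 0 = 1 := by
      have := M.2; rwa [Matrix.det_fin_two] at this
    have hM11 : M.1 1 1 ≠ 0 := by
      intro h0; rw [hc, h0] at hdet; simp at hdet
    have h10 : (M * LzM 1).1 1 0 = M.1 1 1 := by
      rw [Matrix.SpecialLinearGroup.coe_mul]
      simp [Matrix.SpecialLinearGroup.coe_mul, Matrix.mul_apply, Fin.sum_univ_two, LzM, hc]
    obtain ⟨w, hw, e⟩ := key (M * LzM 1) (by rw [h10]; exact hM11)
    obtain ⟨wL, hwL, eL⟩ := exists_word_L p n hpn (-1)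
    refine ⟨w * wL, mul_mem hw hwL, ?_⟩
    rw [_root_.map_mul, e, eL, mul_assoc, LzM_mul]
    norm_num [LzM_zero]

lemma Tn_mem_Gamma (n : ℕ) : (matT ^ n : SL2Z) ∈ CongruenceSubgroup.Gamma n := by
  rw [matT_pow, mem_Gamma_iff]
  simp [Tz, nilpo]

lemma Ln_mem_Gamma (n : ℕ) : (matL ^ n : SL2Z) ∈ CongruenceSubgroup.Gamma n := by
  rw [show (matL : SL2Z) ^ (n : ℕ) = matL ^ ((n : ℕ) : ℤ) from (zpow_natCast _ _).symm,
    matL_zpow, mem_Gamma_iff]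
  simp [Lz, nilpo]

lemma gamma_le_gen_of_not_dvd (n p : ℕ) (hp : p.Prime) (hpn : ¬ p ∣ n) :
    CongruenceSubgroup.Gamma n ≤ genGrp n p := by
  haveI : Fact p.Prime := ⟨hp⟩
  intro γ hγ
  obtain ⟨w, hw, e⟩ := exists_word p n hpn (redN p γ)
  have hwn : w ∈ CongruenceSubgroup.Gamma n := by
    refine (Subgroup.closure_le _).2 ?_ hw
    rintro x hx
    rcases hx with rfl | rfl
    · exact Tn_mem_Gamma n
    · exact Ln_mem_Gamma n
  have hxn : γ * w⁻¹ ∈ CongruenceSubgroup.Gamma (n * p) := by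
    refine mem_Gamma_mul ((Nat.Prime.coprime_iff_not_dvd hp).2 hpn).symm
      (mul_mem hγ (inv_mem hwn)) ?_
    rw [mem_Gamma_iff_redN, _root_.map_mul, _root_.map_inv, e]
    group
  have hwgen : w ∈ genGrp n p := by
    refine (Subgroup.closure_le _).2 ?_ hw
    rintro x hx
    rcases hx with rfl | rfl
    · exact Subgroup.subset_closure (Or.inr ⟨1, by group⟩)
    · have := Lz_mem_genGrp n p 1
      rwa [mul_one, show Lz (n : ℤ) = matL ^ (n : ℕ) by
        rw [show (matL : SL2Z) ^ (n : ℕ) = matL ^ ((n : ℕ) : ℤ) from (zpow_natCast _ _).symm,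
          matL_zpow]] at this
  have : γ = (γ * w⁻¹) * w := by group
  rw [this]
  exact mul_mem (Gamma_le_genGrp n p hxn) hwgen

lemma gamma_le_gen (n p : ℕ) (hp : p.Prime) :
    CongruenceSubgroup.Gamma n ≤ genGrp n p := by
  by_cases h : p ∣ n
  · exact gamma_le_gen_of_dvd n p (Int.natCast_dvd_natCast.2 h)
  · exact gamma_le_gen_of_not_dvd n p hp h

lemma exists_bad_conj (Γ : Subgroup PSL2Z) (m : ℕ) (hm_le : GammaBar m ≤ Γ)
    (p : ℕ) (hp : p.Prime) (n : ℕ) (hnp : n * p = m)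
    (hnot : ¬ GammaBar n ≤ Γ) :
    ∃ g : SL2Z, projSL (g * matT ^ n * g⁻¹) ∉ Γ := by
  by_contra h
  push_neg at h
  apply hnot
  rintro x ⟨γ, hγ, rfl⟩
  have hmem := gamma_le_gen n p hp hγ
  have himg : projSL γ ∈ (genGrp n p).map projSL := ⟨γ, hmem, rfl⟩
  rw [genGrp, MonoidHom.map_closure] at himg
  refine (Subgroup.closure_le Γ).2 ?_ himg
  rintro y ⟨s, hs, rfl⟩
  rcases hs with hs | ⟨g, rfl⟩
  · rw [hnp] at hs; exact hm_le ⟨s, hs, rfl⟩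
  · exact h g

lemma crt_int (s : Finset ℕ) (hs : ∀ q ∈ s, Nat.Prime q) (r : ℕ → ℤ) :
    ∃ a : ℤ, ∀ q ∈ s, (q : ℤ) ∣ (a - r q) := by
  classical
  induction s using Finset.induction_on with
  | empty => exact ⟨0, by simp⟩
  | @insert q s hq ih =>
    have hq' : Nat.Prime q := hs q (Finset.mem_insert_self _ _)
    obtain ⟨a', ha'⟩ := ih (fun q' hq'' => hs q' (Finset.mem_insert_of_mem hq''))
    set P : ℤ := ∏ q' ∈ s, (q' : ℤ) with hP
    have hcop : IsCoprime (q : ℤ) P := by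
      have : Nat.Coprime q (∏ q' ∈ s, q') := by
        refine Nat.Coprime.prod_right fun q' hq'' => ?_
        exact (Nat.coprime_primes hq' (hs q' (Finset.mem_insert_of_mem hq''))).2
          (fun he => hq (he ▸ hq''))
      have h2 : IsCoprime (q : ℤ) ((∏ q' ∈ s, q' : ℕ) : ℤ) := Nat.isCoprime_iff_coprime.2 this
      rwa [Nat.cast_prod] at h2
    obtain ⟨u, v, huv⟩ := hcop
    refine ⟨a' + P * (v * (r q - a')), ?_⟩
    intro q' hq''
    rcases Finset.mem_insert.1 hq'' with rfl | hmem
    · exact ⟨u * (a' - r q'), by linear_combination (r q' - a') * huv⟩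
    · have hPd : (q' : ℤ) ∣ P := Finset.dvd_prod_of_mem (f := fun q'' : ℕ => (q'' : ℤ)) hmem
      have h7 := dvd_add (ha' q' hmem) (hPd.mul_right (v * (r q - a')))
      rwa [show a' - r q' + P * (v * (r q - a')) = a' + P * (v * (r q - a')) - r q' by ring] at h7

lemma exists_coprime_pair (s : Finset ℕ) (hs : ∀ q ∈ s, Nat.Prime q) (A C : ℕ → ℤ)
    (hAC : ∀ q ∈ s, ¬ ((q : ℤ) ∣ A q ∧ (q : ℤ) ∣ C q)) :
    ∃ a c : ℤ, IsCoprime a c ∧ ∀ q ∈ s, (q : ℤ) ∣ (a - A q) ∧ (q : ℤ) ∣ (c - C q) := by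
  classical
  obtain ⟨a₀, ha₀⟩ := crt_int s hs A
  set P : ℤ := ∏ q' ∈ s, (q' : ℤ) with hP
  have hPpos : (1 : ℤ) ≤ P := by
    have h0 : (0 : ℤ) < P := Finset.prod_pos fun q hq => by exact_mod_cast (hs q hq).pos
    omega
  set a : ℤ := a₀ + (1 + a₀.natAbs) * P with ha
  have hapos : 0 < a := by
    have h2 : -(a₀.natAbs : ℤ) ≤ a₀ := by
      rw [← Int.abs_eq_natAbs]; exact neg_abs_le a₀
    have h3 : (0 : ℤ) ≤ (a₀.natAbs : ℤ) := Int.natCast_nonneg _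
    nlinarith [mul_le_mul_of_nonneg_left hPpos (by linarith : (0:ℤ) ≤ 1 + a₀.natAbs)]
  have hane : a ≠ 0 := ne_of_gt hapos
  have hacong : ∀ q ∈ s, (q : ℤ) ∣ (a - A q) := by
    intro q hq
    have hPd : (q : ℤ) ∣ P := Finset.dvd_prod_of_mem (f := fun q'' : ℕ => (q'' : ℤ)) hq
    have h4 := dvd_add (ha₀ q hq) (hPd.mul_left (1 + (a₀.natAbs : ℤ)))
    rwa [show a₀ - A q + (1 + a₀.natAbs) * P = a - A q by rw [ha]; ring] at h4
  set s₂ : Finset ℕ := s ∪ a.natAbs.primeFactors with hs₂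
  have hs₂p : ∀ q ∈ s₂, Nat.Prime q := by
    intro q hq
    rcases Finset.mem_union.1 hq with h | h
    · exact hs q h
    · exact Nat.prime_of_mem_primeFactors h
  obtain ⟨c, hc⟩ := crt_int s₂ hs₂p (fun q => if q ∈ s then C q else 1)
  refine ⟨a, c, ?_, fun q hq => ⟨hacong q hq, by simpa [hq] using hc q (Finset.mem_union_left _ hq)⟩⟩
  rw [Int.isCoprime_iff_gcd_eq_one]
  by_contra hg
  obtain ⟨r, hrp, hrd⟩ := Nat.exists_prime_and_dvd hg
  have hra : (r : ℤ) ∣ a := dvd_trans (Int.natCast_dvd_natCast.2 hrd) (Int.gcd_dvd_left a c)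
  have hrc : (r : ℤ) ∣ c := dvd_trans (Int.natCast_dvd_natCast.2 hrd) (Int.gcd_dvd_right a c)
  by_cases hrs : r ∈ s
  · refine hAC r hrs ⟨?_, ?_⟩
    · have := dvd_sub hra (hacong r hrs)
      rwa [show a - (a - A r) = A r by ring] at this
    · have h5 := hc r (Finset.mem_union_left _ hrs)
      rw [if_pos hrs] at h5
      have := dvd_sub hrc h5
      rwa [show c - (c - C r) = C r by ring] at this
  · have hmem : r ∈ a.natAbs.primeFactors :=
      Nat.mem_primeFactors.2 ⟨hrp, Int.natCast_dvd.1 hra, by simpa using hane⟩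
    have h5 := hc r (Finset.mem_union_right _ hmem)
    rw [if_neg hrs] at h5
    have h6 : (r : ℤ) ∣ 1 := by
      have := dvd_sub hrc h5
      rwa [show c - (c - 1) = 1 by ring] at this
    have := Int.le_of_dvd one_pos h6
    exact absurd this (by exact_mod_cast not_le.2 hrp.one_lt)

lemma fam_zpow {Gm : Type*} [Group Gm] (f : ℤ → Gm) (hadd : ∀ i j, f (i + j) = f i * f j)
    (j t : ℤ) : f j ^ t = f (j * t) := by
  have h0 : f 0 = 1 := mul_left_cancel (a := f 0) (by rw [← hadd]; simp)
  have hneg : ∀ i, f (-i) = (f i)⁻¹ := by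
    intro i
    rw [eq_inv_iff_mul_eq_one, ← hadd]; simp [h0]
  induction t using Int.induction_on with
  | zero => simpa using h0.symm
  | succ n ih => rw [_root_.zpow_add_one, ih, ← hadd]; ring_nf
  | pred n ih =>
    rw [_root_.zpow_sub_one, ih, ← hneg, ← hadd]; ring_nf

lemma conj_cong_mem_Gamma (m p kk : ℕ) (hmk : m = kk * p) (g h : SL2Z) (e1 e2 : ℤ)
    (hA : h.1 0 0 = g.1 0 0 - (p : ℤ) * e1) (hC : h.1 1 0 = g.1 1 0 - (p : ℤ) * e2) :
    (g * matT ^ kk * g⁻¹) * (h * matT ^ kk * h⁻¹)⁻¹ ∈ CongruenceSubgroup.Gamma m := by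
  set a : ℤ := g.1 0 0 with ha
  set c : ℤ := g.1 1 0 with hc
  set K : ℤ := (kk : ℤ) with hK
  set P : ℤ := (p : ℤ) with hP
  have hmz : (m : ℤ) = K * P := by rw [hK, hP, hmk]; push_cast; ring
  rw [matT_pow, conj_Tz g, conj_Tz h,
    show (nilpo (-(h.1 0 0 * h.1 1 0)) (h.1 0 0 * h.1 0 0) (-(h.1 1 0 * h.1 1 0))
      (conj_nil_ok _ _) (kk : ℤ))⁻¹ = nilpo (-(h.1 0 0 * h.1 1 0)) (h.1 0 0 * h.1 0 0)
      (-(h.1 1 0 * h.1 1 0)) (conj_nil_ok _ _) (-(kk : ℤ)) from (nilpo_neg _ _ _ _ _).symm]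
  rw [mem_Gamma_iff]
  refine ⟨⟨e1*e2*P - c*e1 - a*e2 - a*c*e1*e2*K*P + a*c*c*e1*K + a*a*e2*e2*K*P - a*a*c*e2*K, ?_⟩,
    ⟨-(e1*e1*P) + 2*a*e1 + a*c*e1*e1*K*P - a*a*e1*e2*K*P - a*a*c*e1*K + a*a*a*e2*K, ?_⟩,
    ⟨e2*e2*P - 2*c*e2 - c*c*e1*e2*K*P + c*c*c*e1*K + a*c*e2*e2*K*P - a*c*c*e2*K, ?_⟩,
    ⟨-(e1*e2*P) + c*e1 + c*c*e1*e1*K*P + a*e2 - a*c*e1*e2*K*P - a*c*c*e1*K + a*a*c*e2*K, ?_⟩⟩ <;>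
      simp only [Matrix.SpecialLinearGroup.coe_mul, Matrix.mul_apply, Fin.sum_univ_two,
        nilpo_coe, Matrix.cons_val_zero, Matrix.cons_val_one, Matrix.head_cons,
        Matrix.head_fin_const, Matrix.of_apply, Matrix.cons_val', Matrix.empty_val',
        Matrix.cons_val_fin_one, hA, hC] <;>
      rw [hmz] <;> ring1


/-- Larcher's theorem: a finite-index congruence subgroup of `PSL₂(ℤ)` of level `m` has a
cusp of width `m`: there is `g ∈ PSL₂(ℤ)` such that the least `k > 0` with
`g·T^k·g⁻¹ ∈ Γ` equals `m`. -/
theorem larcher_cusp_of_width_level (Γ : Subgroup PSL2Z) (hfin : Γ.index ≠ 0) (m : ℕ)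
    (hm : IsLeast {N : ℕ | 0 < N ∧ GammaBar N ≤ Γ} m) :
    ∃ g : PSL2Z, IsLeast {k : ℕ | 0 < k ∧ g * projSL matT ^ k * g⁻¹ ∈ Γ} m := by

  obtain ⟨⟨hm0, hmle⟩, hmin⟩ := hm
  have hmne : m ≠ 0 := hm0.ne'
  have step1 : ∀ p : ℕ, ∃ gp : SL2Z, p ∈ m.primeFactors →
      projSL (gp * matT ^ (m / p) * gp⁻¹) ∉ Γ := by
    intro p
    by_cases hp : p ∈ m.primeFactors
    · have hpp := Nat.prime_of_mem_primeFactors hp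
      have hpd := Nat.dvd_of_mem_primeFactors hp
      have hlt : m / p < m := Nat.div_lt_self hm0 hpp.one_lt
      have hpos : 0 < m / p := Nat.div_pos (Nat.le_of_dvd hm0 hpd) hpp.pos
      have hnot : ¬ GammaBar (m / p) ≤ Γ := fun hle => absurd (hmin ⟨hpos, hle⟩) (by omega)
      obtain ⟨g, hg⟩ := exists_bad_conj Γ m hmle p hpp (m / p) (Nat.div_mul_cancel hpd) hnot
      exact ⟨g, fun _ => hg⟩
    · exact ⟨1, fun h => absurd h hp⟩
  choose G hG using step1
  have hACcop : ∀ q ∈ m.primeFactors,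
      ¬ ((q : ℤ) ∣ (G q).1 0 0 ∧ (q : ℤ) ∣ (G q).1 1 0) := by
    rintro q hq ⟨h1, h2⟩
    have hdet : (G q).1 0 0 * (G q).1 1 1 - (G q).1 0 1 * (G q).1 1 0 = 1 := by
      have := (G q).2; rwa [Matrix.det_fin_two] at this
    have hd1 : (q : ℤ) ∣ 1 := by
      have := dvd_sub (h1.mul_right ((G q).1 1 1)) (h2.mul_left ((G q).1 0 1))
      rwa [hdet] at this
    have := Int.le_of_dvd one_pos hd1
    exact absurd this (by exact_mod_cast not_le.2 (Nat.prime_of_mem_primeFactors hq).one_lt)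
  obtain ⟨a, c, hcop, hcong⟩ := exists_coprime_pair m.primeFactors
    (fun q hq => Nat.prime_of_mem_primeFactors hq)
    (fun q => (G q).1 0 0) (fun q => (G q).1 1 0) hACcop
  obtain ⟨u, v, huv⟩ := hcop
  set g : SL2Z := ⟨!![a, -v; c, u], by
    simp [Matrix.det_fin_two_of]; linear_combination huv⟩ with hgdef
  have hg00 : g.1 0 0 = a := rfl
  have hg10 : g.1 1 0 = c := rfl
  set φ : ℤ → PSL2Z := fun j => projSL (g * matT ^ j * g⁻¹) with hφ
  have hφadd : ∀ i j : ℤ, φ (i + j) = φ i * φ j := by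
    intro i j
    show projSL (g * matT ^ (i + j) * g⁻¹) = _
    rw [_root_.zpow_add,
      show g * (matT ^ i * matT ^ j) * g⁻¹ = (g * matT ^ i * g⁻¹) * (g * matT ^ j * g⁻¹) by group,
      _root_.map_mul]
  have hφnat : ∀ j : ℕ, φ (j : ℤ) = projSL g * projSL matT ^ j * (projSL g)⁻¹ := by
    intro j
    show projSL (g * matT ^ ((j : ℕ) : ℤ) * g⁻¹) = _
    rw [zpow_natCast, _root_.map_mul, _root_.map_mul, _root_.map_inv, _root_.map_pow]
  have hφm : φ (m : ℤ) ∈ Γ := by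
    show projSL (g * matT ^ ((m : ℕ) : ℤ) * g⁻¹) ∈ Γ
    rw [zpow_natCast]
    exact hmle ⟨g * matT ^ m * g⁻¹,
      (CongruenceSubgroup.Gamma_normal m).conj_mem _ (Tn_mem_Gamma m) g, rfl⟩
  have key : ∀ p ∈ m.primeFactors, φ ((m / p : ℕ) : ℤ) ∉ Γ := by
    intro p hp hmem
    have hpd := Nat.dvd_of_mem_primeFactors hp
    obtain ⟨he1, he2⟩ := hcong p hp
    obtain ⟨e1, h1⟩ := he1
    obtain ⟨e2, h2⟩ := he2
    have hGA : (G p).1 0 0 = g.1 0 0 - (p : ℤ) * e1 := by rw [hg00]; linarith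
    have hGC : (G p).1 1 0 = g.1 1 0 - (p : ℤ) * e2 := by rw [hg10]; linarith
    have hcc := conj_cong_mem_Gamma m p (m / p) (Nat.div_mul_cancel hpd).symm g (G p) e1 e2 hGA hGC
    have hiff := proj_mem_congr hmle hcc
    have hφval : φ ((m / p : ℕ) : ℤ) = projSL (g * matT ^ (m / p : ℕ) * g⁻¹) := by
      show projSL (g * matT ^ (((m / p : ℕ)) : ℤ) * g⁻¹) = _
      rw [zpow_natCast]
    exact hG p hp (hiff.1 (by rwa [hφval] at hmem))
  refine ⟨projSL g, ⟨⟨hm0, by rw [← hφnat]; exact hφm⟩, ?_⟩⟩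
  rintro k ⟨hk0, hkmem⟩
  rw [← hφnat] at hkmem
  set e := Nat.gcd k m with he
  have hφe : φ (e : ℤ) ∈ Γ := by
    have hbez := Nat.gcd_eq_gcd_ab k m
    have heq : φ (e : ℤ) = φ (k : ℤ) ^ Nat.gcdA k m * φ (m : ℤ) ^ Nat.gcdB k m := by
      have harg : ((e : ℕ) : ℤ) = (k : ℤ) * Nat.gcdA k m + (m : ℤ) * Nat.gcdB k m := by
        rw [he]; linarith [hbez]
      rw [fam_zpow φ hφadd, fam_zpow φ hφadd, ← hφadd, harg]
    rw [heq]
    exact mul_mem (Subgroup.zpow_mem _ hkmem _) (Subgroup.zpow_mem _ hφm _)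
  have hed : e ∣ m := Nat.gcd_dvd_right k m
  by_cases hem : e = m
  · exact Nat.le_of_dvd hk0 (hem ▸ Nat.gcd_dvd_left k m)
  · exfalso
    have hq1 : m / e ≠ 1 := by
      intro h1
      have h2 := Nat.div_mul_cancel hed
      rw [h1, one_mul] at h2
      exact hem h2
    obtain ⟨p, hpp, hpd2⟩ := Nat.exists_prime_and_dvd hq1
    have hpm : p ∣ m := hpd2.trans (Nat.div_dvd_of_dvd hed)
    have hpmem : p ∈ m.primeFactors := Nat.mem_primeFactors.2 ⟨hpp, hpm, hmne⟩
    obtain ⟨t, ht⟩ := hpd2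
    have hmp : m / p = e * t := by
      have h3 : m = e * (p * t) := by rw [← ht, Nat.mul_div_cancel' hed]
      rw [h3, show e * (p * t) = (e * t) * p by ring]
      exact Nat.mul_div_cancel _ hpp.pos
    have hfin2 : φ ((m / p : ℕ) : ℤ) ∈ Γ := by
      rw [hmp]
      push_cast
      rw [← fam_zpow φ hφadd]
      exact Subgroup.zpow_mem _ hφe _
    exact key p hpmem hfin2
end
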